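/- arXiv:1805.09151 — 4 statements merged into one kernel-verified Lean document; each statement's English description precedes it below -/
import Mathlib

section
/- Let G ∈ 𝒞𝒢^s(n) with 2 ≤ s ≤ n−3, let v* be a vertex of minimum degree t of G, and set Y = V(G) ∖ N[v*]. If G[Y] ≅ K_{n_1,…,n_l} ∪ rK_1 with r ≥ 1 (i.e., G[Y] has at least one isolated vertex), then G ∈ 𝒢_1^s(n). In particular, every isolated vertex y of G[Y] satisfies N(y) = N(v*) and hence is a congruent vertex of I-type. -/
open Matrix BigOperators

namespace TwoPosEig

variable {V : Type*}

/-- The real adjacency matrix of a simple graph (classical decidability). -/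
noncomputable def adjMat [Fintype V] [DecidableEq V] (G : SimpleGraph V) : Matrix V V ℝ :=
  letI := Classical.decRel G.Adj
  G.adjMatrix ℝ

lemma adjMat_isHermitian [Fintype V] [DecidableEq V] (G : SimpleGraph V) :
    (adjMat G).IsHermitian := by
  letI := Classical.decRel G.Adj
  rw [Matrix.IsHermitian, Matrix.conjTranspose_eq_transpose_of_trivial]
  exact SimpleGraph.isSymm_adjMatrix G

/-- The eigenvalues of (the adjacency matrix of) a graph, as a function on vertices. -/
noncomputable def eigs [Fintype V] [DecidableEq V] (G : SimpleGraph V) : V → ℝ :=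
  (adjMat_isHermitian G).eigenvalues

/-- `p(G)`: the number of positive eigenvalues (with multiplicity). -/
noncomputable def posCount [Finite V] (G : SimpleGraph V) : ℕ :=
  letI := Fintype.ofFinite V
  letI := Classical.decEq V
  Nat.card {i : V // 0 < eigs G i}

/-- `η(G)`: the number of zero eigenvalues (with multiplicity), the nullity. -/
noncomputable def nullCount [Finite V] (G : SimpleGraph V) : ℕ :=
  letI := Fintype.ofFinite V
  letI := Classical.decEq V
  Nat.card {i : V // eigs G i = 0}

/-- `λ_k(G)`: the `k`-th largest eigenvalue (1-indexed); junk value `0` out of range. -/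
noncomputable def lam [Finite V] (G : SimpleGraph V) (k : ℕ) : ℝ :=
  letI := Fintype.ofFinite V
  letI := Classical.decEq V
  (((Finset.univ.val.map (eigs G)).sort (· ≤ ·)).reverse).getD (k - 1) 0

/-- Membership in `𝒢^s(n)` (the order `n` being the cardinality of the vertex type):
`p(G) = 2` and `η(G) = s`. -/
def memClass [Finite V] (s : ℕ) (G : SimpleGraph V) : Prop :=
  posCount G = 2 ∧ nullCount G = s

/-- `v` is a congruent vertex of I-type: some other vertex `u`, non-adjacent to `v`,
has the same neighbourhood. -/
def ITypeVertex (G : SimpleGraph V) (v : V) : Prop :=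
  ∃ u, u ≠ v ∧ ¬ G.Adj u v ∧ G.neighborSet u = G.neighborSet v

/-- `u` is a congruent vertex of II-type: there are two non-adjacent vertices `v, w`
such that `N(u)` is a disjoint union of `N(v)` and `N(w)`. -/
def IITypeVertex (G : SimpleGraph V) (u : V) : Prop :=
  ∃ v w, v ≠ w ∧ ¬ G.Adj v w ∧ Disjoint (G.neighborSet v) (G.neighborSet w) ∧
    G.neighborSet u = G.neighborSet v ∪ G.neighborSet w

/-- `u v x y` is a congruent (induced) quadrangle with congruent edges `uv`, `xy`. -/
def CongruentQuad (G : SimpleGraph V) (u v x y : V) : Prop :=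
  u ≠ v ∧ u ≠ x ∧ u ≠ y ∧ v ≠ x ∧ v ≠ y ∧ x ≠ y ∧
  G.Adj u v ∧ G.Adj v x ∧ G.Adj x y ∧ G.Adj y u ∧ ¬ G.Adj u x ∧ ¬ G.Adj v y ∧
  G.neighborSet u \ {y, v} = G.neighborSet v \ {u, x} ∧
  G.neighborSet x \ {v, y} = G.neighborSet y \ {x, u}

/-- A congruent vertex of III-type: a vertex of some congruent quadrangle. -/
def IIITypeVertex (G : SimpleGraph V) (z : V) : Prop :=
  ∃ u v x y, CongruentQuad G u v x y ∧ (z = u ∨ z = v ∨ z = x ∨ z = y)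

/-- Membership in `𝒢_1^s(n)`: a connected graph obtained by adding a congruent vertex
of I-type to some graph in `𝒢^{s-1}(n-1)`. -/
def memG1 {n : ℕ} (s : ℕ) (G : SimpleGraph (Fin n)) : Prop :=
  G.Connected ∧ ∃ v : Fin n, ITypeVertex G v ∧ memClass (s - 1) (G.induce {v}ᶜ)

/-- Membership in `𝒢_2^s(n)`. -/
def memG2 {n : ℕ} (s : ℕ) (G : SimpleGraph (Fin n)) : Prop :=
  G.Connected ∧ ∃ v : Fin n, IITypeVertex G v ∧ memClass (s - 1) (G.induce {v}ᶜ)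

/-- Membership in `𝒢_3^s(n)`. -/
def memG3 {n : ℕ} (s : ℕ) (G : SimpleGraph (Fin n)) : Prop :=
  G.Connected ∧ ∃ v : Fin n, IIITypeVertex G v ∧ memClass (s - 1) (G.induce {v}ᶜ)

/-- Oboudi's graph `G_m`: two cliques `K_{⌈m/2⌉}` (on `v_1, …`) and `K_{⌊m/2⌋}`
(on `w_1, …`), where `v_i ∼ w_j` iff `j ≥ ⌊m/2⌋ - i + 2` (1-indexed), i.e. (0-indexed)
`⌊m/2⌋ ≤ i + j`. -/
def oboudi (m : ℕ) : SimpleGraph (Fin ((m + 1) / 2) ⊕ Fin (m / 2)) :=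
  SimpleGraph.fromRel fun a b =>
    match a, b with
    | Sum.inl _, Sum.inl _ => True
    | Sum.inr _, Sum.inr _ => True
    | Sum.inl i, Sum.inr j => m / 2 ≤ (i : ℕ) + (j : ℕ)
    | Sum.inr _, Sum.inl _ => False

/-- The generalized lexicographic product `G[K_{t v}]`: each vertex `v` is replaced by a
clique of order `t v`, with complete joins along edges of `G`. -/
def lexProd (G : SimpleGraph V) (t : V → ℕ) : SimpleGraph (Σ v : V, Fin (t v)) :=
  SimpleGraph.fromRel fun a b => a.1 = b.1 ∨ G.Adj a.1 b.1

/-- Index conversion identifying the vertices `v_1, …, v_{⌈k/2⌉}, w_1, …, w_{⌊k/2⌋}`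
of `G_k` with `Fin k` (in this order). -/
def toIdx {k : ℕ} : Fin ((k + 1) / 2) ⊕ Fin (k / 2) → Fin k
  | Sum.inl i => ⟨(i : ℕ), by have := i.isLt; omega⟩
  | Sum.inr j => ⟨(k + 1) / 2 + (j : ℕ), by have := j.isLt; omega⟩

/-- `B_k(n_1, …, n_k) = G_k[K_{n_1}, …, K_{n_k}]`. -/
def bGraph (k : ℕ) (nn : Fin k → ℕ) :
    SimpleGraph (Σ v : Fin ((k + 1) / 2) ⊕ Fin (k / 2), Fin (nn (toIdx v))) :=
  lexProd (oboudi k) fun v => nn (toIdx v)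

/-- Membership in `𝓓* = {B_k(n_1,…,n_k) ∈ 𝓑_k^{00}(n) : 4 ≤ k ≤ 14, n ≤ 14}` (up to
isomorphism). -/
def memDstar {n : ℕ} (G : SimpleGraph (Fin n)) : Prop :=
  ∃ (k : ℕ) (nn : Fin k → ℕ), 4 ≤ k ∧ k ≤ 14 ∧ (∀ i, 1 ≤ nn i) ∧ (∑ i, nn i) ≤ 14 ∧
    lam (bGraph k nn) 3 = 0 ∧ lam (bGraph k nn) 4 = 0 ∧ Nonempty (G ≃g bGraph k nn)

/-- The degree of a vertex. -/
noncomputable def deg [Finite V] (G : SimpleGraph V) (v : V) : ℕ :=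
  Nat.card (G.neighborSet v)

/-- `v` is a vertex of minimum degree. -/
def IsMinDegVertex [Finite V] (G : SimpleGraph V) (v : V) : Prop :=
  ∀ w, deg G v ≤ deg G w

/-- The set `Y = V(G) ∖ N[v]`. -/
def Yset (G : SimpleGraph V) (v : V) : Set V :=
  (G.neighborSet v ∪ {v})ᶜ

/-- `G` is `X`-complete with respect to `v`: `G[Y] ≅ K_{n-t-1}` with `n-t-1 ≥ 2`
and `G[X]` is complete, where `X = N(v)`, `Y = V(G) ∖ N[v]`. -/
def IsXComplete [Finite V] (G : SimpleGraph V) (v : V) : Prop :=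
  2 ≤ (Yset G v).ncard ∧ (Yset G v).Pairwise G.Adj ∧ (G.neighborSet v).Pairwise G.Adj

/-- An `X`-complete graph is reduced when the traces on `Y` of the neighbourhoods of
vertices of `X` form a chain. -/
def IsReduced (G : SimpleGraph V) (v : V) : Prop :=
  ∀ x ∈ G.neighborSet v, ∀ x' ∈ G.neighborSet v,
    G.neighborSet x ∩ Yset G v ⊆ G.neighborSet x' ∩ Yset G v ∨
    G.neighborSet x' ∩ Yset G v ⊆ G.neighborSet x ∩ Yset G v


section AuxKey
variable {W W' : Type*} [Fintype W] [DecidableEq W] [Fintype W'] [DecidableEq W']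

/-- extension by zero of a function on the subtype of positive coordinates -/
private noncomputable def extZ (e : W' → ℝ) (x : {i : W' // 0 < e i} → ℝ) : W' → ℝ :=
  fun j => if h : 0 < e j then x ⟨j, h⟩ else 0

private lemma key_diag (d : W → ℝ) (e : W' → ℝ) (Q : Matrix W W' ℝ)
    (h : Matrix.diagonal e = Qᵀ * Matrix.diagonal d * Q) :
    Fintype.card {i : W' // 0 < e i} ≤ Fintype.card {i : W // 0 < d i} := by
  classical
  set L : ({i : W' // 0 < e i} → ℝ) →ₗ[ℝ] ({i : W // 0 < d i} → ℝ) :=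
    { toFun := fun x i => (Q *ᵥ extZ e x) i.1
      map_add' := by
        intro x y
        funext i
        have : extZ e (x + y) = extZ e x + extZ e y := by
          funext j; simp only [extZ, Pi.add_apply]; split <;> simp
        simp [this, Matrix.mulVec_add]
      map_smul' := by
        intro c x
        funext i
        have : extZ e (c • x) = c • extZ e x := by
          funext j; simp only [extZ, Pi.smul_apply]; split <;> simp
        simp [this, Matrix.mulVec_smul] } with hL
  have hinj : Function.Injective L := by
    rw [← LinearMap.ker_eq_bot, LinearMap.ker_eq_bot']
    intro x hx
    by_contra hx0
    set u := extZ e x with hu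
    have hS1 : u ⬝ᵥ (Matrix.diagonal e *ᵥ u) = ∑ j, e j * u j ^ 2 := by
      simp [Matrix.mulVec_diagonal, dotProduct]
      exact Finset.sum_congr rfl fun j _ => by ring
    have hpos : 0 < u ⬝ᵥ (Matrix.diagonal e *ᵥ u) := by
      rw [hS1]
      obtain ⟨j0, hj0⟩ : ∃ j0, x j0 ≠ 0 := by
        by_contra hc; push_neg at hc; exact hx0 (funext hc)
      refine Finset.sum_pos' (fun j _ => ?_) ⟨j0.1, Finset.mem_univ _, ?_⟩
      · by_cases hj : 0 < e j
        · have h2 : 0 ≤ u j ^ 2 := sq_nonneg _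
          positivity
        · have h2 : u j = 0 := by simp [hu, extZ, hj]
          simp [h2]
      · have hu0 : u j0.1 = x j0 := by simp [hu, extZ, j0.2]
        have h2 : 0 < u j0.1 ^ 2 := by
          rw [hu0]; positivity
        exact mul_pos j0.2 h2
    have hneg : u ⬝ᵥ (Matrix.diagonal e *ᵥ u) ≤ 0 := by
      rw [h]
      set w := Q *ᵥ u with hw
      have h1 : (Qᵀ * Matrix.diagonal d * Q) *ᵥ u = Qᵀ *ᵥ (Matrix.diagonal d *ᵥ w) := by
        rw [hw, Matrix.mulVec_mulVec, Matrix.mulVec_mulVec]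
      have h2 : u ⬝ᵥ ((Qᵀ * Matrix.diagonal d * Q) *ᵥ u) = w ⬝ᵥ (Matrix.diagonal d *ᵥ w) := by
        rw [h1, Matrix.dotProduct_mulVec, Matrix.vecMul_transpose, ← hw]
      rw [h2]
      have hterm : ∀ i, w i * (Matrix.diagonal d *ᵥ w) i ≤ 0 := by
        intro i
        rw [Matrix.mulVec_diagonal]
        by_cases hi : 0 < d i
        · have : w i = 0 := by
            have := congrFun hx ⟨i, hi⟩
            simpa [hL] using this
          simp [this]
        · push_neg at hi
          nlinarith [sq_nonneg (w i)]
      calc w ⬝ᵥ (Matrix.diagonal d *ᵥ w) = ∑ i, w i * (Matrix.diagonal d *ᵥ w) i := rfl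
        _ ≤ 0 := Finset.sum_nonpos fun i _ => hterm i
    linarith
  calc Fintype.card {i : W' // 0 < e i}
      = Module.finrank ℝ ({i : W' // 0 < e i} → ℝ) := (Module.finrank_pi ℝ).symm
    _ ≤ Module.finrank ℝ ({i : W // 0 < d i} → ℝ) := LinearMap.finrank_le_finrank_of_injective hinj
    _ = Fintype.card {i : W // 0 < d i} := Module.finrank_pi ℝ

private lemma alg_aux (A DA : Matrix W W ℝ) (B DB : Matrix W' W' ℝ) (P : Matrix W W' ℝ)
    (UA : Matrix W W ℝ) (UB : Matrix W' W' ℝ)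
    (hDA : DA = UAᵀ * A * UA) (hDB : DB = UBᵀ * B * UB)
    (huA : UA * UAᵀ = 1) (h : B = Pᵀ * A * P) :
    DB = (UAᵀ * P * UB)ᵀ * DA * (UAᵀ * P * UB) := by
  subst hDA hDB h
  simp only [Matrix.transpose_mul, Matrix.transpose_transpose]
  simp only [Matrix.mul_assoc]
  rw [← Matrix.mul_assoc UA UAᵀ, huA, Matrix.one_mul, ← Matrix.mul_assoc UA UAᵀ, huA,
    Matrix.one_mul]

private lemma diag_of_herm (A : Matrix W W ℝ) (hA : A.IsHermitian) :
    Matrix.diagonal hA.eigenvalues =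
      ((hA.eigenvectorUnitary : Matrix W W ℝ))ᵀ * A * (hA.eigenvectorUnitary : Matrix W W ℝ) := by
  have hst : (star (hA.eigenvectorUnitary : Matrix W W ℝ)) =
      (hA.eigenvectorUnitary : Matrix W W ℝ)ᵀ := by
    rw [Matrix.star_eq_conjTranspose, Matrix.conjTranspose_eq_transpose_of_trivial]
  have hofReal : Matrix.diagonal (RCLike.ofReal ∘ hA.eigenvalues) =
      Matrix.diagonal hA.eigenvalues := by congr 1
  have hu1 : (hA.eigenvectorUnitary : Matrix W W ℝ)ᵀ * (hA.eigenvectorUnitary : Matrix W W ℝ)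
      = 1 := by
    rw [← hst]; exact (Matrix.mem_unitaryGroup_iff').mp hA.eigenvectorUnitary.2
  symm
  have h1 := congrArg
    (fun M => (hA.eigenvectorUnitary : Matrix W W ℝ)ᵀ * M * (hA.eigenvectorUnitary : Matrix W W ℝ))
    hA.spectral_theorem
  simp only [Unitary.conjStarAlgAut_apply] at h1
  rw [h1, hst, hofReal]
  simp only [Matrix.mul_assoc]
  rw [← Matrix.mul_assoc _ (hA.eigenvectorUnitary : Matrix W W ℝ), hu1]
  simp

private lemma unitary_mul_transpose (A : Matrix W W ℝ) (hA : A.IsHermitian) :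
    (hA.eigenvectorUnitary : Matrix W W ℝ) * (hA.eigenvectorUnitary : Matrix W W ℝ)ᵀ = 1 := by
  have hst : (star (hA.eigenvectorUnitary : Matrix W W ℝ)) =
      (hA.eigenvectorUnitary : Matrix W W ℝ)ᵀ := by
    rw [Matrix.star_eq_conjTranspose, Matrix.conjTranspose_eq_transpose_of_trivial]
  rw [← hst]; exact (Matrix.mem_unitaryGroup_iff).mp hA.eigenvectorUnitary.2

private lemma posCard_le_of_congr (A : Matrix W W ℝ) (B : Matrix W' W' ℝ)
    (hA : A.IsHermitian) (hB : B.IsHermitian) (P : Matrix W W' ℝ) (h : B = Pᵀ * A * P) :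
    Fintype.card {i : W' // 0 < hB.eigenvalues i} ≤
      Fintype.card {i : W // 0 < hA.eigenvalues i} :=
  key_diag hA.eigenvalues hB.eigenvalues
    ((hA.eigenvectorUnitary : Matrix W W ℝ)ᵀ * P * (hB.eigenvectorUnitary : Matrix W' W' ℝ))
    (alg_aux A _ B _ P _ _ (diag_of_herm A hA) (diag_of_herm B hB)
      (unitary_mul_transpose A hA) h)

/-- inclusion-type matrix of a map f : W' → W -/
private def inclMat (f : W' → W) : Matrix W W' ℝ := Matrix.of fun i j => if i = f j then 1 else 0

private lemma submatrix_eq_congr (A : Matrix W W ℝ) (f : W' → W) :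
    A.submatrix f f = (inclMat f)ᵀ * A * inclMat f := by
  ext j j'
  simp only [Matrix.mul_apply, Matrix.transpose_apply, inclMat, Matrix.of_apply,
    Matrix.submatrix_apply]
  simp [ite_mul, mul_ite, Finset.sum_ite_eq' Finset.univ]

private lemma adjMat_apply_of_adj {G : SimpleGraph W} {i j : W}
    (h : G.Adj i j) : adjMat G i j = 1 := by
  letI := Classical.decRel G.Adj
  simp [adjMat, h]

private lemma adjMat_apply_of_not_adj {G : SimpleGraph W} {i j : W}
    (h : ¬ G.Adj i j) : adjMat G i j = 0 := by
  letI := Classical.decRel G.Adj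
  simp [adjMat, h]

private lemma posCount_eq (G : SimpleGraph W) :
    posCount G = Fintype.card {i : W // 0 < (adjMat_isHermitian G).eigenvalues i} := by
  unfold posCount
  rw [Subsingleton.elim (Fintype.ofFinite W) (inferInstance : Fintype W),
    Subsingleton.elim (Classical.decEq W) (inferInstance : DecidableEq W)]
  rw [Nat.card_eq_fintype_card]
  rfl

private lemma nullCount_eq (G : SimpleGraph W) :
    nullCount G = Fintype.card {i : W // (adjMat_isHermitian G).eigenvalues i = 0} := by
  unfold nullCount
  rw [Subsingleton.elim (Fintype.ofFinite W) (inferInstance : Fintype W),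
    Subsingleton.elim (Classical.decEq W) (inferInstance : DecidableEq W)]
  rw [Nat.card_eq_fintype_card]
  rfl

private lemma nullCount_eq_card_sub_rank (G : SimpleGraph W) :
    nullCount G = Fintype.card W - (adjMat G).rank := by
  rw [nullCount_eq, (adjMat_isHermitian G).rank_eq_card_non_zero_eigs]
  have h : ∀ i : W, ((adjMat_isHermitian G).eigenvalues i = 0) ↔
      ¬ ((adjMat_isHermitian G).eigenvalues i ≠ 0) := by intro i; tauto
  rw [Fintype.card_congr (Equiv.subtypeEquivRight h), Fintype.card_subtype_compl]


private lemma delete_twin (G : SimpleGraph W) (y v : W) (hvy : v ≠ y)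
    (hAdjIff : ∀ w, G.Adj y w ↔ G.Adj v w) :
    posCount (G.induce ({y}ᶜ : Set W)) = posCount G ∧
    (adjMat (G.induce ({y}ᶜ : Set W))).rank = (adjMat G).rank := by
  classical
  have hvmem : v ∈ ({y}ᶜ : Set W) := by simp [hvy]
  let c : ({y}ᶜ : Set W) → W := Subtype.val
  let π : W → ({y}ᶜ : Set W) := fun i => if h : i = y then ⟨v, hvmem⟩ else ⟨i, by simp [h]⟩
  have hBA : adjMat (G.induce ({y}ᶜ : Set W)) = (adjMat G).submatrix c c := by
    ext i j
    simp only [Matrix.submatrix_apply]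
    by_cases h : G.Adj (i : W) (j : W)
    · rw [adjMat_apply_of_adj (by simpa using h), adjMat_apply_of_adj h]
    · rw [adjMat_apply_of_not_adj (by simpa using h), adjMat_apply_of_not_adj h]
  have hAd : ∀ w, adjMat G y w = adjMat G v w := by
    intro w
    by_cases h : G.Adj y w
    · rw [adjMat_apply_of_adj h, adjMat_apply_of_adj ((hAdjIff w).mp h)]
    · rw [adjMat_apply_of_not_adj h,
        adjMat_apply_of_not_adj (fun hcon => h ((hAdjIff w).mpr hcon))]
  have hAd' : ∀ w, adjMat G w y = adjMat G w v := by
    intro w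
    by_cases h : G.Adj w y
    · rw [adjMat_apply_of_adj h, adjMat_apply_of_adj ((hAdjIff w).mp h.symm).symm]
    · rw [adjMat_apply_of_not_adj h,
        adjMat_apply_of_not_adj (fun hcon => h ((hAdjIff w).mpr hcon.symm).symm)]
  have hdup : ∀ i i' : W, adjMat G ↑(π i) ↑(π i') = adjMat G i i' := by
    intro i i'
    by_cases h1 : i = y <;> by_cases h2 : i' = y <;>
      simp only [π, h1, h2, dif_pos, dif_neg, not_false_iff]
    · subst h1; subst h2
      rw [adjMat_apply_of_not_adj (G.irrefl), adjMat_apply_of_not_adj (G.irrefl)]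
    · subst h1
      exact (hAd i').symm
    · subst h2
      exact (hAd' i).symm
  have hc2 : adjMat G = (adjMat (G.induce ({y}ᶜ : Set W))).submatrix π π := by
    ext i i'
    rw [hBA]
    simp only [Matrix.submatrix_apply]
    exact (hdup i i').symm
  have hcong1 : adjMat (G.induce ({y}ᶜ : Set W)) = (inclMat c)ᵀ * adjMat G * inclMat c := by
    rw [hBA, submatrix_eq_congr]
  have hcong2 : adjMat G =
      (inclMat π)ᵀ * adjMat (G.induce ({y}ᶜ : Set W)) * inclMat π := by
    rw [hc2, submatrix_eq_congr]
  constructor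
  · have e1 := posCard_le_of_congr (adjMat G) (adjMat (G.induce ({y}ᶜ : Set W)))
      (adjMat_isHermitian G) (adjMat_isHermitian _) (inclMat c) hcong1
    have e2 := posCard_le_of_congr (adjMat (G.induce ({y}ᶜ : Set W))) (adjMat G)
      (adjMat_isHermitian _) (adjMat_isHermitian G) (inclMat π) hcong2
    rw [posCount_eq, posCount_eq]
    omega
  · apply le_antisymm
    · rw [hcong1]
      exact (Matrix.rank_mul_le_left _ _).trans (Matrix.rank_mul_le_right _ _)
    · rw [hcong2]
      exact (Matrix.rank_mul_le_left _ _).trans (Matrix.rank_mul_le_right _ _)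

end AuxKey

theorem isolated_in_Y {n s : ℕ} (hs : 2 ≤ s) (hsn : s ≤ n - 3)
    (G : SimpleGraph (Fin n)) (hconn : G.Connected) (hG : memClass s G)
    (v : Fin n) (hv : IsMinDegVertex G v) (Y : Set (Fin n)) (hY : Y = Yset G v)
    (hstr : ∃ (l r : ℕ) (nn : Fin l → ℕ), 1 ≤ r ∧ (∀ i, 1 ≤ nn i) ∧
      Nonempty ((G.induce Y) ≃g
        ((SimpleGraph.completeMultipartiteGraph fun i => Fin (nn i)) ⊕g (⊥ : SimpleGraph (Fin r))))) :
    memG1 s G ∧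
    ∀ y ∈ Y, (∀ z ∈ Y, ¬ G.Adj y z) →
      G.neighborSet y = G.neighborSet v ∧ ITypeVertex G y := by
  classical
  have hvY : v ∉ Y := by rw [hY]; simp [Yset]
  have hpart2 : ∀ y ∈ Y, (∀ z ∈ Y, ¬ G.Adj y z) →
      G.neighborSet y = G.neighborSet v ∧ ITypeVertex G y := by
    intro y hyY hiso
    have hymem : y ∉ G.neighborSet v ∪ {v} := by rw [hY] at hyY; exact hyY
    have hyv : y ≠ v := fun h => hymem (Or.inr h)
    have hnadj : ¬ G.Adj v y := fun h => hymem (Or.inl h)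
    have hsub : G.neighborSet y ⊆ G.neighborSet v := by
      intro w hw
      by_contra hwv
      refine hiso w ?_ hw
      rw [hY]
      intro hmem
      rcases hmem with h1 | h2
      · exact hwv h1
      · rw [Set.mem_singleton_iff] at h2
        subst h2
        exact hnadj hw.symm
    have hle : (G.neighborSet v).ncard ≤ (G.neighborSet y).ncard := by
      rw [← Nat.card_coe_set_eq, ← Nat.card_coe_set_eq]
      exact hv y
    have heq : G.neighborSet y = G.neighborSet v :=
      Set.eq_of_subset_of_ncard_le hsub hle (Set.toFinite _)
    exact ⟨heq, v, hyv.symm, hnadj, heq.symm⟩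
  refine ⟨?_, hpart2⟩
  obtain ⟨l, r, nn, hr, hnn, ⟨e⟩⟩ := hstr
  set y0 : Y := e.symm (Sum.inr ⟨0, hr⟩) with hy0
  have hy0Y : (y0 : Fin n) ∈ Y := y0.2
  have hiso0 : ∀ z ∈ Y, ¬ G.Adj ↑y0 z := by
    intro z hz hadj
    have h1 : (G.induce Y).Adj y0 ⟨z, hz⟩ := by
      simpa using hadj
    have h2 := (SimpleGraph.Iso.map_adj_iff e).mpr h1
    rw [hy0, RelIso.apply_symm_apply] at h2
    rcases h : e ⟨z, hz⟩ with j | j <;> rw [h] at h2 <;>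
      simp [SimpleGraph.sum_adj] at h2
  obtain ⟨heqN, hIT⟩ := hpart2 _ hy0Y hiso0
  have hvy : v ≠ (y0 : Fin n) := fun h => hvY (h ▸ hy0Y)
  have hAdjIff : ∀ w, G.Adj (y0 : Fin n) w ↔ G.Adj v w := fun w => Set.ext_iff.mp heqN w
  obtain ⟨hposeq, hrankeq⟩ := delete_twin G (y0 : Fin n) v hvy hAdjIff
  have hposG : posCount G = 2 := hG.1
  have hnullG : nullCount G = s := hG.2
  have hnulleq := nullCount_eq_card_sub_rank G
  rw [Fintype.card_fin] at hnulleq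
  have hrA : (adjMat G).rank ≤ n := by
    have h1 := Matrix.rank_le_card_width (adjMat G)
    simpa using h1
  have hcards : Fintype.card (({(y0 : Fin n)}ᶜ : Set (Fin n))) = n - 1 := by
    rw [Fintype.card_compl_set]
    simp
  have hnull' : nullCount (G.induce ({(y0 : Fin n)}ᶜ : Set (Fin n))) = s - 1 := by
    rw [nullCount_eq_card_sub_rank, hcards, hrankeq]
    omega
  exact ⟨hconn, (y0 : Fin n), hIT, by rw [hposeq]; exact hposG, hnull'⟩

end TwoPosEig
end

section
/- Let G ∈ 𝒞𝒢^s(n) with 2 ≤ s ≤ n−3, let v* be a vertex of minimum degree t of G, and set X = N(v*), Y = V(G) ∖ N[v*]. Suppose G[Y] is isomorphic to a complete multipartite graph with at least two parts, and let y, y' ∈ Y be two non-adjacent vertices with N_X(y') ∖ N_X(y) ≠ ∅. Then N_X(y) = ∅ and N_X(y') = X; consequently N(y') is the disjoint union of N(v*) and N(y), so y' is a congruent vertex of II-type. -/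
open Matrix BigOperators

namespace TwoPosEig

variable {V : Type*}

set_option maxHeartbeats 1600000

lemma adjMat_eq_one' [Fintype V] [DecidableEq V] (G : SimpleGraph V) {a b : V}
    (h : G.Adj a b) : adjMat G a b = 1 := by
  unfold adjMat
  rw [SimpleGraph.adjMatrix_apply]
  simp [h]

lemma adjMat_eq_zero' [Fintype V] [DecidableEq V] (G : SimpleGraph V) {a b : V}
    (h : ¬ G.Adj a b) : adjMat G a b = 0 := by
  unfold adjMat
  rw [SimpleGraph.adjMatrix_apply]
  simp [h]

lemma dot_expand' {m : Type*} [Fintype m] [DecidableEq m] (A : Matrix m m ℝ) (hA : A.IsHermitian)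
    (x : m → ℝ) :
    x ⬝ᵥ (A *ᵥ x) = ∑ i, hA.eigenvalues i *
      (inner (𝕜 := ℝ) (hA.eigenvectorBasis i) (WithLp.toLp 2 x : EuclideanSpace ℝ m))^2 := by
  set b := hA.eigenvectorBasis with hb
  set c : m → ℝ := fun i => inner (𝕜 := ℝ) (b i) (WithLp.toLp 2 x : EuclideanSpace ℝ m) with hc
  have key : ∀ i, A *ᵥ (b i : m → ℝ) = hA.eigenvalues i • (b i : m → ℝ) :=
    fun i => hA.mulVec_eigenvectorBasis i
  have hx' : x = ∑ i, c i • (b i : m → ℝ) :=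
    by simpa [c] using congrArg WithLp.ofLp (b.sum_repr' (WithLp.toLp 2 x)).symm
  have hdot : ∀ i, x ⬝ᵥ (b i : m → ℝ) = c i := by
    intro i
    show x ⬝ᵥ (b i : m → ℝ) = inner (𝕜 := ℝ) (b i) (WithLp.toLp 2 x : EuclideanSpace ℝ m)
    rw [PiLp.inner_apply]
    simp [dotProduct, mul_comm]
  have hmv : A *ᵥ (∑ i, c i • (b i : m → ℝ)) = ∑ i, c i • (hA.eigenvalues i • (b i : m → ℝ)) := by
    rw [← Matrix.mulVecLin_apply, map_sum]
    refine Finset.sum_congr rfl fun i _ => ?_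
    rw [LinearMap.map_smul, Matrix.mulVecLin_apply, key i]
  conv_lhs => rw [hx', hmv, ← hx']
  calc x ⬝ᵥ (∑ i, c i • hA.eigenvalues i • (b i : m → ℝ))
      = ∑ i, c i * (hA.eigenvalues i * (x ⬝ᵥ (b i : m → ℝ))) := by
        simp only [dotProduct, Finset.sum_apply, Pi.smul_apply, smul_eq_mul, Finset.mul_sum]
        rw [Finset.sum_comm]
        exact Finset.sum_congr rfl fun i _ => Finset.sum_congr rfl fun j _ => by
          ring
    _ = ∑ i, hA.eigenvalues i * c i ^ 2 := by
        exact Finset.sum_congr rfl fun i _ => by rw [hdot i]; ring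

lemma aux_spec' {m : Type*} [Fintype m] [DecidableEq m] (A : Matrix m m ℝ) (hA : A.IsHermitian)
    (h2 : Nat.card {i : m // 0 < hA.eigenvalues i} ≤ 2) (u : Fin 3 → m → ℝ)
    (hpos : ∀ c : Fin 3 → ℝ, c ≠ 0 → 0 < (∑ k, c k • u k) ⬝ᵥ (A *ᵥ (∑ k, c k • u k))) : False := by
  classical
  set b := hA.eigenvectorBasis with hb
  set P : Finset m := Finset.univ.filter (fun i => 0 < hA.eigenvalues i) with hP
  have hcard : P.card ≤ 2 := by
    rwa [Nat.card_eq_fintype_card, Fintype.card_subtype] at h2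
  set xv : (Fin 3 → ℝ) → (m → ℝ) := fun c => ∑ k, c k • u k with hxv
  have hxadd : ∀ c c' : Fin 3 → ℝ, xv (c + c') = xv c + xv c' := by
    intro c c'; simp [hxv, add_smul, Finset.sum_add_distrib]
  have hxsmul : ∀ (r : ℝ) (c : Fin 3 → ℝ), xv (r • c) = r • xv c := by
    intro r c; simp [hxv, smul_smul, Finset.smul_sum]
  let L : (Fin 3 → ℝ) →ₗ[ℝ] ({i // i ∈ P} → ℝ) :=
    { toFun := fun c p => inner (𝕜 := ℝ) (b p.1) (WithLp.toLp 2 (xv c) : EuclideanSpace ℝ m)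
      map_add' := by intro c c'; funext p; simp [hxadd, inner_add_right]
      map_smul' := by intro r c; funext p; simp [hxsmul, inner_smul_right] }
  have hni : ¬ Function.Injective L := by
    intro hinj
    have h := LinearMap.finrank_le_finrank_of_injective hinj
    rw [Module.finrank_pi, Module.finrank_pi] at h
    simp [Fintype.card_coe] at h
    omega
  rw [injective_iff_map_eq_zero] at hni
  push_neg at hni
  obtain ⟨c, hLc, hc0⟩ := hni
  have hnonpos : xv c ⬝ᵥ (A *ᵥ xv c) ≤ 0 := by
    rw [dot_expand' A hA (xv c)]
    apply Finset.sum_nonpos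
    intro i _
    by_cases hi : 0 < hA.eigenvalues i
    · have hz : inner (𝕜 := ℝ) (b i) (WithLp.toLp 2 (xv c) : EuclideanSpace ℝ m) = 0 := congrFun hLc ⟨i, by simp [hP, hi]⟩
      rw [← hb, hz]
      simp
    · push_neg at hi
      exact mul_nonpos_of_nonpos_of_nonneg hi (sq_nonneg _)
  exact absurd (hpos c hc0) (not_lt.2 hnonpos)

lemma sum_smul_dot {n N : ℕ} (dd : Fin N → ℝ) (e : Fin N → Fin n → ℝ) (v : Fin n → ℝ) :
    (∑ i, dd i • e i) ⬝ᵥ v = ∑ i, dd i * (e i ⬝ᵥ v) := by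
  simp only [dotProduct, Finset.sum_apply, Pi.smul_apply, smul_eq_mul, Finset.sum_mul,
    Finset.mul_sum]
  rw [Finset.sum_comm]
  exact Finset.sum_congr rfl fun i _ => Finset.sum_congr rfl fun j _ => by ring

lemma dot_sum_smul {n N : ℕ} (dd : Fin N → ℝ) (e : Fin N → Fin n → ℝ) (v : Fin n → ℝ) :
    v ⬝ᵥ (∑ i, dd i • e i) = ∑ i, dd i * (v ⬝ᵥ e i) := by
  simp only [dotProduct, Finset.sum_apply, Pi.smul_apply, smul_eq_mul, Finset.sum_mul,
    Finset.mul_sum]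
  rw [Finset.sum_comm]
  exact Finset.sum_congr rfl fun i _ => Finset.sum_congr rfl fun j _ => by ring

lemma bilin_expand {n N : ℕ} (A : Matrix (Fin n) (Fin n) ℝ) (w : Fin N → Fin n)
    (dd : Fin N → ℝ) :
    (∑ i, dd i • (Pi.single (w i) 1 : Fin n → ℝ)) ⬝ᵥ
      (A *ᵥ (∑ i, dd i • (Pi.single (w i) 1 : Fin n → ℝ)))
      = ∑ i, ∑ j, dd i * (A (w i) (w j) * dd j) := by
  have h1 : A *ᵥ (∑ i, dd i • (Pi.single (w i) 1 : Fin n → ℝ))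
      = ∑ i, dd i • (A *ᵥ (Pi.single (w i) 1 : Fin n → ℝ)) := by
    rw [← Matrix.mulVecLin_apply, map_sum]
    exact Finset.sum_congr rfl fun i _ => by rw [LinearMap.map_smul, Matrix.mulVecLin_apply]
  rw [h1, sum_smul_dot]
  refine Finset.sum_congr rfl fun i _ => ?_
  rw [dot_sum_smul, Finset.mul_sum]
  refine Finset.sum_congr rfl fun j _ => ?_
  rw [Matrix.mulVec_single_one, single_dotProduct, Matrix.col_apply]
  ring_nf

lemma pos_diag3 (α β γ : ℝ) (hα : 0 < α) (hβ : 0 < β) (hγ : 0 < γ)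
    (c : Fin 3 → ℝ) (hc : c ≠ 0) :
    0 < α * c 0 ^ 2 + β * c 1 ^ 2 + γ * c 2 ^ 2 := by
  have h1 : (0:ℝ) ≤ α * c 0 ^ 2 := by positivity
  have h2 : (0:ℝ) ≤ β * c 1 ^ 2 := by positivity
  have h3 : (0:ℝ) ≤ γ * c 2 ^ 2 := by positivity
  have : ∃ k, c k ≠ 0 := by
    by_contra h
    push_neg at h
    exact hc (funext h)
  obtain ⟨k, hk⟩ := this
  fin_cases k
  · have : 0 < α * c 0 ^ 2 := by positivity
    linarith
  · have : 0 < β * c 1 ^ 2 := by positivity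
    linarith
  · have : 0 < γ * c 2 ^ 2 := by positivity
    linarith

lemma master {n : ℕ} (G : SimpleGraph (Fin n)) (h2 : posCount G = 2)
    {N : ℕ} (w : Fin N → Fin n) (B : Matrix (Fin N) (Fin N) ℝ)
    (hB1 : ∀ i j, G.Adj (w i) (w j) → B i j = 1)
    (hB0 : ∀ i j, ¬ G.Adj (w i) (w j) → B i j = 0)
    (C : Fin 3 → Fin N → ℝ) (α β γ : ℝ) (hα : 0 < α) (hβ : 0 < β) (hγ : 0 < γ)
    (hq : ∀ c : Fin 3 → ℝ,
      ∑ i, ∑ j, (∑ k, c k * C k i) * (B i j * (∑ k, c k * C k j))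
        = α * c 0 ^ 2 + β * c 1 ^ 2 + γ * c 2 ^ 2) : False := by
  have h2' : Nat.card {i : Fin n // 0 < (adjMat_isHermitian G).eigenvalues i} ≤ 2 := by
    unfold posCount eigs at h2
    rw [Subsingleton.elim (Fintype.ofFinite (Fin n)) (Fin.fintype n),
        Subsingleton.elim (Classical.decEq (Fin n)) (instDecidableEqFin n)] at h2
    exact le_of_eq h2
  have hAw : ∀ i j, adjMat G (w i) (w j) = B i j := by
    intro i j
    by_cases h : G.Adj (w i) (w j)
    · rw [hB1 i j h, adjMat_eq_one' G h]
    · rw [hB0 i j h, adjMat_eq_zero' G h]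
  refine aux_spec' (adjMat G) (adjMat_isHermitian G) h2'
    (fun k => ∑ i, C k i • (Pi.single (w i) 1 : Fin n → ℝ)) ?_
  intro c hc
  have hx : (∑ k, c k • ∑ i, C k i • (Pi.single (w i) 1 : Fin n → ℝ))
      = ∑ i, (∑ k, c k * C k i) • (Pi.single (w i) 1 : Fin n → ℝ) := by
    simp only [Finset.smul_sum, smul_smul]
    rw [Finset.sum_comm]
    exact Finset.sum_congr rfl fun i _ => by rw [← Finset.sum_smul]
  rw [hx, bilin_expand]
  have heq : ∑ i, ∑ j, (∑ k, c k * C k i) * (adjMat G (w i) (w j) * (∑ k, c k * C k j))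
      = α * c 0 ^ 2 + β * c 1 ^ 2 + γ * c 2 ^ 2 := by
    rw [← hq c]
    exact Finset.sum_congr rfl fun i _ => Finset.sum_congr rfl fun j _ => by rw [hAw]
  rw [heq]
  exact pos_diag3 α β γ hα hβ hγ c hc


lemma configA {n : ℕ} (G : SimpleGraph (Fin n)) (h2 : posCount G = 2)
    (v0 v1 v2 v3 v4 v5 : Fin n)
    (a01 : G.Adj v0 v1) (a02 : G.Adj v0 v2) (a14 : G.Adj v1 v4) (a23 : G.Adj v2 v3)
    (a35 : G.Adj v3 v5) (a45 : G.Adj v4 v5)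
    (n13 : ¬G.Adj v1 v3) (n34 : ¬G.Adj v3 v4) (n03 : ¬G.Adj v0 v3) (n04 : ¬G.Adj v0 v4)
    (n05 : ¬G.Adj v0 v5) : False := by
  have a10 := a01.symm; have a20 := a02.symm; have a41 := a14.symm
  have a53 := a35.symm; have a54 := a45.symm
  have m31 : ¬G.Adj v3 v1 := fun hh => n13 hh.symm
  have m43 : ¬G.Adj v4 v3 := fun hh => n34 hh.symm
  have m30 : ¬G.Adj v3 v0 := fun hh => n03 hh.symm
  have m40 : ¬G.Adj v4 v0 := fun hh => n04 hh.symm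
  have m50 : ¬G.Adj v5 v0 := fun hh => n05 hh.symm
  have a32 := a23.symm
  by_cases h12 : G.Adj v1 v2
  case pos =>
    by_cases h24 : G.Adj v2 v4
    case pos =>
      by_cases h15 : G.Adj v1 v5
      case pos =>
        by_cases h25 : G.Adj v2 v5
        case pos =>
          have s21 : G.Adj v2 v1 := h12.symm
          have s42 : G.Adj v4 v2 := h24.symm
          have s51 : G.Adj v5 v1 := h15.symm
          have s52 : G.Adj v5 v2 := h25.symm
          refine master G h2 ![v0,v1,v2,v3,v4,v5]
              !![0,1,1,0,0,0; 1,0,1,0,1,1; 1,1,0,1,1,1; 0,0,1,0,0,1; 0,1,1,0,0,1; 0,1,1,1,1,0]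
              ?_ ?_ ![![1,1,0,0,0,0],![-1,-1,1,2,0,0],![-2,1,-1,-2,2,1]] (2 : ℝ) (2 : ℝ) (2 : ℝ)
              (by norm_num) (by norm_num) (by norm_num) ?_
          · intro i j h
            fin_cases i <;> fin_cases j <;>
              first | rfl | exact absurd h (G.irrefl) | exact absurd h (by assumption)
          · intro i j h
            fin_cases i <;> fin_cases j <;>
              first | rfl | exact absurd (by assumption) h
          · intro c
            simp only [Fin.sum_univ_succ, Fin.sum_univ_zero, Matrix.cons_val_zero, Matrix.cons_val_one,
        Matrix.head_cons, Matrix.cons_val_succ, Matrix.cons_val', Matrix.empty_val',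
        Matrix.cons_val_fin_one, Matrix.head_fin_const, Matrix.of_apply, Fin.succ_zero_eq_one,
        Fin.succ_one_eq_two]
            ring
        case neg =>
          have s21 : G.Adj v2 v1 := h12.symm
          have s42 : G.Adj v4 v2 := h24.symm
          have s51 : G.Adj v5 v1 := h15.symm
          have m52 : ¬G.Adj v5 v2 := fun hh => h25 hh.symm
          refine master G h2 ![v0,v1,v2,v3,v4,v5]
              !![0,1,1,0,0,0; 1,0,1,0,1,1; 1,1,0,1,1,0; 0,0,1,0,0,1; 0,1,1,0,0,1; 0,1,0,1,1,0]
              ?_ ?_ ![![1,1,0,0,0,0],![-1,-1,1,2,0,0],![-1,1,-1,-1,1,1]] (2 : ℝ) (2 : ℝ) (2 : ℝ)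
              (by norm_num) (by norm_num) (by norm_num) ?_
          · intro i j h
            fin_cases i <;> fin_cases j <;>
              first | rfl | exact absurd h (G.irrefl) | exact absurd h (by assumption)
          · intro i j h
            fin_cases i <;> fin_cases j <;>
              first | rfl | exact absurd (by assumption) h
          · intro c
            simp only [Fin.sum_univ_succ, Fin.sum_univ_zero, Matrix.cons_val_zero, Matrix.cons_val_one,
        Matrix.head_cons, Matrix.cons_val_succ, Matrix.cons_val', Matrix.empty_val',
        Matrix.cons_val_fin_one, Matrix.head_fin_const, Matrix.of_apply, Fin.succ_zero_eq_one,
        Fin.succ_one_eq_two]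
            ring
      case neg =>
        by_cases h25 : G.Adj v2 v5
        case pos =>
          have s21 : G.Adj v2 v1 := h12.symm
          have s42 : G.Adj v4 v2 := h24.symm
          have m51 : ¬G.Adj v5 v1 := fun hh => h15 hh.symm
          have s52 : G.Adj v5 v2 := h25.symm
          refine master G h2 ![v0,v1,v2,v3,v4,v5]
              !![0,1,1,0,0,0; 1,0,1,0,1,0; 1,1,0,1,1,1; 0,0,1,0,0,1; 0,1,1,0,0,1; 0,0,1,1,1,0]
              ?_ ?_ ![![1,1,0,0,0,0],![-1,-1,1,2,0,0],![-3,1,-1,-3,4,1]] (2 : ℝ) (2 : ℝ) (4 : ℝ)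
              (by norm_num) (by norm_num) (by norm_num) ?_
          · intro i j h
            fin_cases i <;> fin_cases j <;>
              first | rfl | exact absurd h (G.irrefl) | exact absurd h (by assumption)
          · intro i j h
            fin_cases i <;> fin_cases j <;>
              first | rfl | exact absurd (by assumption) h
          · intro c
            simp only [Fin.sum_univ_succ, Fin.sum_univ_zero, Matrix.cons_val_zero, Matrix.cons_val_one,
        Matrix.head_cons, Matrix.cons_val_succ, Matrix.cons_val', Matrix.empty_val',
        Matrix.cons_val_fin_one, Matrix.head_fin_const, Matrix.of_apply, Fin.succ_zero_eq_one,
        Fin.succ_one_eq_two]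
            ring
        case neg =>
          have s21 : G.Adj v2 v1 := h12.symm
          have s42 : G.Adj v4 v2 := h24.symm
          have m51 : ¬G.Adj v5 v1 := fun hh => h15 hh.symm
          have m52 : ¬G.Adj v5 v2 := fun hh => h25 hh.symm
          refine master G h2 ![v0,v1,v2,v3,v4,v5]
              !![0,1,1,0,0,0; 1,0,1,0,1,0; 1,1,0,1,1,0; 0,0,1,0,0,1; 0,1,1,0,0,1; 0,0,0,1,1,0]
              ?_ ?_ ![![1,1,0,0,0,0],![-1,-1,1,2,0,0],![-1,1,-1,-2,2,1]] (2 : ℝ) (2 : ℝ) (2 : ℝ)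
              (by norm_num) (by norm_num) (by norm_num) ?_
          · intro i j h
            fin_cases i <;> fin_cases j <;>
              first | rfl | exact absurd h (G.irrefl) | exact absurd h (by assumption)
          · intro i j h
            fin_cases i <;> fin_cases j <;>
              first | rfl | exact absurd (by assumption) h
          · intro c
            simp only [Fin.sum_univ_succ, Fin.sum_univ_zero, Matrix.cons_val_zero, Matrix.cons_val_one,
        Matrix.head_cons, Matrix.cons_val_succ, Matrix.cons_val', Matrix.empty_val',
        Matrix.cons_val_fin_one, Matrix.head_fin_const, Matrix.of_apply, Fin.succ_zero_eq_one,
        Fin.succ_one_eq_two]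
            ring
    case neg =>
      by_cases h15 : G.Adj v1 v5
      case pos =>
        by_cases h25 : G.Adj v2 v5
        case pos =>
          have s21 : G.Adj v2 v1 := h12.symm
          have m42 : ¬G.Adj v4 v2 := fun hh => h24 hh.symm
          have s51 : G.Adj v5 v1 := h15.symm
          have s52 : G.Adj v5 v2 := h25.symm
          refine master G h2 ![v0,v1,v2,v3,v4,v5]
              !![0,1,1,0,0,0; 1,0,1,0,1,1; 1,1,0,1,0,1; 0,0,1,0,0,1; 0,1,0,0,0,1; 0,1,1,1,1,0]
              ?_ ?_ ![![1,1,0,0,0,0],![-1,-1,1,2,0,0],![-1,1,-1,-1,1,1]] (2 : ℝ) (2 : ℝ) (2 : ℝ)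
              (by norm_num) (by norm_num) (by norm_num) ?_
          · intro i j h
            fin_cases i <;> fin_cases j <;>
              first | rfl | exact absurd h (G.irrefl) | exact absurd h (by assumption)
          · intro i j h
            fin_cases i <;> fin_cases j <;>
              first | rfl | exact absurd (by assumption) h
          · intro c
            simp only [Fin.sum_univ_succ, Fin.sum_univ_zero, Matrix.cons_val_zero, Matrix.cons_val_one,
        Matrix.head_cons, Matrix.cons_val_succ, Matrix.cons_val', Matrix.empty_val',
        Matrix.cons_val_fin_one, Matrix.head_fin_const, Matrix.of_apply, Fin.succ_zero_eq_one,
        Fin.succ_one_eq_two]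
            ring
        case neg =>
          have s21 : G.Adj v2 v1 := h12.symm
          have m42 : ¬G.Adj v4 v2 := fun hh => h24 hh.symm
          have s51 : G.Adj v5 v1 := h15.symm
          have m52 : ¬G.Adj v5 v2 := fun hh => h25 hh.symm
          refine master G h2 ![v0,v1,v2,v3,v4,v5]
              !![0,1,1,0,0,0; 1,0,1,0,1,1; 1,1,0,1,0,0; 0,0,1,0,0,1; 0,1,0,0,0,1; 0,1,0,1,1,0]
              ?_ ?_ ![![1,1,0,0,0,0],![-1,-1,1,2,0,0],![-1,1,-1,0,1,1]] (2 : ℝ) (2 : ℝ) (4 : ℝ)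
              (by norm_num) (by norm_num) (by norm_num) ?_
          · intro i j h
            fin_cases i <;> fin_cases j <;>
              first | rfl | exact absurd h (G.irrefl) | exact absurd h (by assumption)
          · intro i j h
            fin_cases i <;> fin_cases j <;>
              first | rfl | exact absurd (by assumption) h
          · intro c
            simp only [Fin.sum_univ_succ, Fin.sum_univ_zero, Matrix.cons_val_zero, Matrix.cons_val_one,
        Matrix.head_cons, Matrix.cons_val_succ, Matrix.cons_val', Matrix.empty_val',
        Matrix.cons_val_fin_one, Matrix.head_fin_const, Matrix.of_apply, Fin.succ_zero_eq_one,
        Fin.succ_one_eq_two]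
            ring
      case neg =>
        by_cases h25 : G.Adj v2 v5
        case pos =>
          have s21 : G.Adj v2 v1 := h12.symm
          have m42 : ¬G.Adj v4 v2 := fun hh => h24 hh.symm
          have m51 : ¬G.Adj v5 v1 := fun hh => h15 hh.symm
          have s52 : G.Adj v5 v2 := h25.symm
          refine master G h2 ![v0,v1,v2,v3,v4,v5]
              !![0,1,1,0,0,0; 1,0,1,0,1,0; 1,1,0,1,0,1; 0,0,1,0,0,1; 0,1,0,0,0,1; 0,0,1,1,1,0]
              ?_ ?_ ![![1,1,0,0,0,0],![-1,-1,1,2,0,0],![-1,1,-1,-1,2,1]] (2 : ℝ) (2 : ℝ) (4 : ℝ)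
              (by norm_num) (by norm_num) (by norm_num) ?_
          · intro i j h
            fin_cases i <;> fin_cases j <;>
              first | rfl | exact absurd h (G.irrefl) | exact absurd h (by assumption)
          · intro i j h
            fin_cases i <;> fin_cases j <;>
              first | rfl | exact absurd (by assumption) h
          · intro c
            simp only [Fin.sum_univ_succ, Fin.sum_univ_zero, Matrix.cons_val_zero, Matrix.cons_val_one,
        Matrix.head_cons, Matrix.cons_val_succ, Matrix.cons_val', Matrix.empty_val',
        Matrix.cons_val_fin_one, Matrix.head_fin_const, Matrix.of_apply, Fin.succ_zero_eq_one,
        Fin.succ_one_eq_two]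
            ring
        case neg =>
          have s21 : G.Adj v2 v1 := h12.symm
          have m42 : ¬G.Adj v4 v2 := fun hh => h24 hh.symm
          have m51 : ¬G.Adj v5 v1 := fun hh => h15 hh.symm
          have m52 : ¬G.Adj v5 v2 := fun hh => h25 hh.symm
          refine master G h2 ![v0,v1,v2,v3,v4,v5]
              !![0,1,1,0,0,0; 1,0,1,0,1,0; 1,1,0,1,0,0; 0,0,1,0,0,1; 0,1,0,0,0,1; 0,0,0,1,1,0]
              ?_ ?_ ![![1,1,0,0,0,0],![-1,-1,1,2,0,0],![0,1,-1,-1,1,1]] (2 : ℝ) (2 : ℝ) (2 : ℝ)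
              (by norm_num) (by norm_num) (by norm_num) ?_
          · intro i j h
            fin_cases i <;> fin_cases j <;>
              first | rfl | exact absurd h (G.irrefl) | exact absurd h (by assumption)
          · intro i j h
            fin_cases i <;> fin_cases j <;>
              first | rfl | exact absurd (by assumption) h
          · intro c
            simp only [Fin.sum_univ_succ, Fin.sum_univ_zero, Matrix.cons_val_zero, Matrix.cons_val_one,
        Matrix.head_cons, Matrix.cons_val_succ, Matrix.cons_val', Matrix.empty_val',
        Matrix.cons_val_fin_one, Matrix.head_fin_const, Matrix.of_apply, Fin.succ_zero_eq_one,
        Fin.succ_one_eq_two]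
            ring
  case neg =>
    by_cases h24 : G.Adj v2 v4
    case pos =>
      by_cases h15 : G.Adj v1 v5
      case pos =>
        by_cases h25 : G.Adj v2 v5
        case pos =>
          have m21 : ¬G.Adj v2 v1 := fun hh => h12 hh.symm
          have s42 : G.Adj v4 v2 := h24.symm
          have s51 : G.Adj v5 v1 := h15.symm
          have s52 : G.Adj v5 v2 := h25.symm
          refine master G h2 ![v0,v1,v2,v3,v4,v5]
              !![0,1,1,0,0,0; 1,0,0,0,1,1; 1,0,0,1,1,1; 0,0,1,0,0,1; 0,1,1,0,0,1; 0,1,1,1,1,0]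
              ?_ ?_ ![![1,1,0,0,0,0],![0,-1,1,1,0,0],![-2,1,-1,0,1,1]] (2 : ℝ) (2 : ℝ) (2 : ℝ)
              (by norm_num) (by norm_num) (by norm_num) ?_
          · intro i j h
            fin_cases i <;> fin_cases j <;>
              first | rfl | exact absurd h (G.irrefl) | exact absurd h (by assumption)
          · intro i j h
            fin_cases i <;> fin_cases j <;>
              first | rfl | exact absurd (by assumption) h
          · intro c
            simp only [Fin.sum_univ_succ, Fin.sum_univ_zero, Matrix.cons_val_zero, Matrix.cons_val_one,
        Matrix.head_cons, Matrix.cons_val_succ, Matrix.cons_val', Matrix.empty_val',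
        Matrix.cons_val_fin_one, Matrix.head_fin_const, Matrix.of_apply, Fin.succ_zero_eq_one,
        Fin.succ_one_eq_two]
            ring
        case neg =>
          have m21 : ¬G.Adj v2 v1 := fun hh => h12 hh.symm
          have s42 : G.Adj v4 v2 := h24.symm
          have s51 : G.Adj v5 v1 := h15.symm
          have m52 : ¬G.Adj v5 v2 := fun hh => h25 hh.symm
          refine master G h2 ![v0,v1,v2,v3,v4,v5]
              !![0,1,1,0,0,0; 1,0,0,0,1,1; 1,0,0,1,1,0; 0,0,1,0,0,1; 0,1,1,0,0,1; 0,1,0,1,1,0]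
              ?_ ?_ ![![1,1,0,0,0,0],![0,-1,1,1,0,0],![-1,1,-1,1,0,1]] (2 : ℝ) (2 : ℝ) (2 : ℝ)
              (by norm_num) (by norm_num) (by norm_num) ?_
          · intro i j h
            fin_cases i <;> fin_cases j <;>
              first | rfl | exact absurd h (G.irrefl) | exact absurd h (by assumption)
          · intro i j h
            fin_cases i <;> fin_cases j <;>
              first | rfl | exact absurd (by assumption) h
          · intro c
            simp only [Fin.sum_univ_succ, Fin.sum_univ_zero, Matrix.cons_val_zero, Matrix.cons_val_one,
        Matrix.head_cons, Matrix.cons_val_succ, Matrix.cons_val', Matrix.empty_val',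
        Matrix.cons_val_fin_one, Matrix.head_fin_const, Matrix.of_apply, Fin.succ_zero_eq_one,
        Fin.succ_one_eq_two]
            ring
      case neg =>
        by_cases h25 : G.Adj v2 v5
        case pos =>
          have m21 : ¬G.Adj v2 v1 := fun hh => h12 hh.symm
          have s42 : G.Adj v4 v2 := h24.symm
          have m51 : ¬G.Adj v5 v1 := fun hh => h15 hh.symm
          have s52 : G.Adj v5 v2 := h25.symm
          refine master G h2 ![v0,v1,v2,v3,v4,v5]
              !![0,1,1,0,0,0; 1,0,0,0,1,0; 1,0,0,1,1,1; 0,0,1,0,0,1; 0,1,1,0,0,1; 0,0,1,1,1,0]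
              ?_ ?_ ![![1,1,0,0,0,0],![0,-1,1,1,0,0],![-2,1,-1,-1,2,1]] (2 : ℝ) (2 : ℝ) (2 : ℝ)
              (by norm_num) (by norm_num) (by norm_num) ?_
          · intro i j h
            fin_cases i <;> fin_cases j <;>
              first | rfl | exact absurd h (G.irrefl) | exact absurd h (by assumption)
          · intro i j h
            fin_cases i <;> fin_cases j <;>
              first | rfl | exact absurd (by assumption) h
          · intro c
            simp only [Fin.sum_univ_succ, Fin.sum_univ_zero, Matrix.cons_val_zero, Matrix.cons_val_one,
        Matrix.head_cons, Matrix.cons_val_succ, Matrix.cons_val', Matrix.empty_val',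
        Matrix.cons_val_fin_one, Matrix.head_fin_const, Matrix.of_apply, Fin.succ_zero_eq_one,
        Fin.succ_one_eq_two]
            ring
        case neg =>
          have m21 : ¬G.Adj v2 v1 := fun hh => h12 hh.symm
          have s42 : G.Adj v4 v2 := h24.symm
          have m51 : ¬G.Adj v5 v1 := fun hh => h15 hh.symm
          have m52 : ¬G.Adj v5 v2 := fun hh => h25 hh.symm
          refine master G h2 ![v0,v1,v2,v3,v4,v5]
              !![0,1,1,0,0,0; 1,0,0,0,1,0; 1,0,0,1,1,0; 0,0,1,0,0,1; 0,1,1,0,0,1; 0,0,0,1,1,0]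
              ?_ ?_ ![![1,1,0,0,0,0],![0,-1,1,1,0,0],![-1,1,-1,0,1,1]] (2 : ℝ) (2 : ℝ) (2 : ℝ)
              (by norm_num) (by norm_num) (by norm_num) ?_
          · intro i j h
            fin_cases i <;> fin_cases j <;>
              first | rfl | exact absurd h (G.irrefl) | exact absurd h (by assumption)
          · intro i j h
            fin_cases i <;> fin_cases j <;>
              first | rfl | exact absurd (by assumption) h
          · intro c
            simp only [Fin.sum_univ_succ, Fin.sum_univ_zero, Matrix.cons_val_zero, Matrix.cons_val_one,
        Matrix.head_cons, Matrix.cons_val_succ, Matrix.cons_val', Matrix.empty_val',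
        Matrix.cons_val_fin_one, Matrix.head_fin_const, Matrix.of_apply, Fin.succ_zero_eq_one,
        Fin.succ_one_eq_two]
            ring
    case neg =>
      by_cases h15 : G.Adj v1 v5
      case pos =>
        by_cases h25 : G.Adj v2 v5
        case pos =>
          have m21 : ¬G.Adj v2 v1 := fun hh => h12 hh.symm
          have m42 : ¬G.Adj v4 v2 := fun hh => h24 hh.symm
          have s51 : G.Adj v5 v1 := h15.symm
          have s52 : G.Adj v5 v2 := h25.symm
          refine master G h2 ![v0,v1,v2,v3,v4,v5]
              !![0,1,1,0,0,0; 1,0,0,0,1,1; 1,0,0,1,0,1; 0,0,1,0,0,1; 0,1,0,0,0,1; 0,1,1,1,1,0]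
              ?_ ?_ ![![1,1,0,0,0,0],![0,-1,1,1,0,0],![-2,1,-1,1,1,1]] (2 : ℝ) (2 : ℝ) (4 : ℝ)
              (by norm_num) (by norm_num) (by norm_num) ?_
          · intro i j h
            fin_cases i <;> fin_cases j <;>
              first | rfl | exact absurd h (G.irrefl) | exact absurd h (by assumption)
          · intro i j h
            fin_cases i <;> fin_cases j <;>
              first | rfl | exact absurd (by assumption) h
          · intro c
            simp only [Fin.sum_univ_succ, Fin.sum_univ_zero, Matrix.cons_val_zero, Matrix.cons_val_one,
        Matrix.head_cons, Matrix.cons_val_succ, Matrix.cons_val', Matrix.empty_val',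
        Matrix.cons_val_fin_one, Matrix.head_fin_const, Matrix.of_apply, Fin.succ_zero_eq_one,
        Fin.succ_one_eq_two]
            ring
        case neg =>
          have m21 : ¬G.Adj v2 v1 := fun hh => h12 hh.symm
          have m42 : ¬G.Adj v4 v2 := fun hh => h24 hh.symm
          have s51 : G.Adj v5 v1 := h15.symm
          have m52 : ¬G.Adj v5 v2 := fun hh => h25 hh.symm
          refine master G h2 ![v0,v1,v2,v3,v4,v5]
              !![0,1,1,0,0,0; 1,0,0,0,1,1; 1,0,0,1,0,0; 0,0,1,0,0,1; 0,1,0,0,0,1; 0,1,0,1,1,0]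
              ?_ ?_ ![![1,1,0,0,0,0],![0,-1,1,1,0,0],![-1,1,-1,1,0,1]] (2 : ℝ) (2 : ℝ) (2 : ℝ)
              (by norm_num) (by norm_num) (by norm_num) ?_
          · intro i j h
            fin_cases i <;> fin_cases j <;>
              first | rfl | exact absurd h (G.irrefl) | exact absurd h (by assumption)
          · intro i j h
            fin_cases i <;> fin_cases j <;>
              first | rfl | exact absurd (by assumption) h
          · intro c
            simp only [Fin.sum_univ_succ, Fin.sum_univ_zero, Matrix.cons_val_zero, Matrix.cons_val_one,
        Matrix.head_cons, Matrix.cons_val_succ, Matrix.cons_val', Matrix.empty_val',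
        Matrix.cons_val_fin_one, Matrix.head_fin_const, Matrix.of_apply, Fin.succ_zero_eq_one,
        Fin.succ_one_eq_two]
            ring
      case neg =>
        by_cases h25 : G.Adj v2 v5
        case pos =>
          have m21 : ¬G.Adj v2 v1 := fun hh => h12 hh.symm
          have m42 : ¬G.Adj v4 v2 := fun hh => h24 hh.symm
          have m51 : ¬G.Adj v5 v1 := fun hh => h15 hh.symm
          have s52 : G.Adj v5 v2 := h25.symm
          refine master G h2 ![v0,v1,v2,v3,v4,v5]
              !![0,1,1,0,0,0; 1,0,0,0,1,0; 1,0,0,1,0,1; 0,0,1,0,0,1; 0,1,0,0,0,1; 0,0,1,1,1,0]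
              ?_ ?_ ![![1,1,0,0,0,0],![0,-1,1,1,0,0],![-1,1,-1,0,1,1]] (2 : ℝ) (2 : ℝ) (2 : ℝ)
              (by norm_num) (by norm_num) (by norm_num) ?_
          · intro i j h
            fin_cases i <;> fin_cases j <;>
              first | rfl | exact absurd h (G.irrefl) | exact absurd h (by assumption)
          · intro i j h
            fin_cases i <;> fin_cases j <;>
              first | rfl | exact absurd (by assumption) h
          · intro c
            simp only [Fin.sum_univ_succ, Fin.sum_univ_zero, Matrix.cons_val_zero, Matrix.cons_val_one,
        Matrix.head_cons, Matrix.cons_val_succ, Matrix.cons_val', Matrix.empty_val',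
        Matrix.cons_val_fin_one, Matrix.head_fin_const, Matrix.of_apply, Fin.succ_zero_eq_one,
        Fin.succ_one_eq_two]
            ring
        case neg =>
          have m21 : ¬G.Adj v2 v1 := fun hh => h12 hh.symm
          have m42 : ¬G.Adj v4 v2 := fun hh => h24 hh.symm
          have m51 : ¬G.Adj v5 v1 := fun hh => h15 hh.symm
          have m52 : ¬G.Adj v5 v2 := fun hh => h25 hh.symm
          refine master G h2 ![v0,v1,v2,v3,v4,v5]
              !![0,1,1,0,0,0; 1,0,0,0,1,0; 1,0,0,1,0,0; 0,0,1,0,0,1; 0,1,0,0,0,1; 0,0,0,1,1,0]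
              ?_ ?_ ![![1,1,0,0,0,0],![0,-1,1,1,0,0],![-1,1,-1,1,1,1]] (2 : ℝ) (2 : ℝ) (4 : ℝ)
              (by norm_num) (by norm_num) (by norm_num) ?_
          · intro i j h
            fin_cases i <;> fin_cases j <;>
              first | rfl | exact absurd h (G.irrefl) | exact absurd h (by assumption)
          · intro i j h
            fin_cases i <;> fin_cases j <;>
              first | rfl | exact absurd (by assumption) h
          · intro c
            simp only [Fin.sum_univ_succ, Fin.sum_univ_zero, Matrix.cons_val_zero, Matrix.cons_val_one,
        Matrix.head_cons, Matrix.cons_val_succ, Matrix.cons_val', Matrix.empty_val',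
        Matrix.cons_val_fin_one, Matrix.head_fin_const, Matrix.of_apply, Fin.succ_zero_eq_one,
        Fin.succ_one_eq_two]
            ring

lemma configB {n : ℕ} (G : SimpleGraph (Fin n)) (h2 : posCount G = 2)
    (v0 v1 v2 v3 v4 v5 : Fin n)
    (a01 : G.Adj v0 v1) (a02 : G.Adj v0 v2) (a14 : G.Adj v1 v4)
    (a35 : G.Adj v3 v5) (a45 : G.Adj v4 v5)
    (n13 : ¬G.Adj v1 v3) (n23 : ¬G.Adj v2 v3) (n24 : ¬G.Adj v2 v4) (n34 : ¬G.Adj v3 v4)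
    (n03 : ¬G.Adj v0 v3) (n04 : ¬G.Adj v0 v4) (n05 : ¬G.Adj v0 v5) : False := by
  have a10 := a01.symm; have a20 := a02.symm; have a41 := a14.symm
  have a53 := a35.symm; have a54 := a45.symm
  have m31 : ¬G.Adj v3 v1 := fun hh => n13 hh.symm
  have m43 : ¬G.Adj v4 v3 := fun hh => n34 hh.symm
  have m30 : ¬G.Adj v3 v0 := fun hh => n03 hh.symm
  have m40 : ¬G.Adj v4 v0 := fun hh => n04 hh.symm
  have m50 : ¬G.Adj v5 v0 := fun hh => n05 hh.symm
  have m32 : ¬G.Adj v3 v2 := fun hh => n23 hh.symm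
  have m42 : ¬G.Adj v4 v2 := fun hh => n24 hh.symm
  by_cases h12 : G.Adj v1 v2
  case pos =>
    by_cases h15 : G.Adj v1 v5
    case pos =>
      by_cases h25 : G.Adj v2 v5
      case pos =>
        have s21 : G.Adj v2 v1 := h12.symm
        have s51 : G.Adj v5 v1 := h15.symm
        have s52 : G.Adj v5 v2 := h25.symm
        refine master G h2 ![v0,v1,v2,v3,v4,v5]
            !![0,1,1,0,0,0; 1,0,1,0,1,1; 1,1,0,0,0,1; 0,0,0,0,0,1; 0,1,0,0,0,1; 0,1,1,1,1,0]
            ?_ ?_ ![![1,1,0,0,0,0],![-1,1,-1,0,2,0],![0,-1,1,2,-2,1]] (2 : ℝ) (2 : ℝ) (2 : ℝ)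
            (by norm_num) (by norm_num) (by norm_num) ?_
        · intro i j h
          fin_cases i <;> fin_cases j <;>
            first | rfl | exact absurd h (G.irrefl) | exact absurd h (by assumption)
        · intro i j h
          fin_cases i <;> fin_cases j <;>
            first | rfl | exact absurd (by assumption) h
        · intro c
          simp only [Fin.sum_univ_succ, Fin.sum_univ_zero, Matrix.cons_val_zero, Matrix.cons_val_one,
        Matrix.head_cons, Matrix.cons_val_succ, Matrix.cons_val', Matrix.empty_val',
        Matrix.cons_val_fin_one, Matrix.head_fin_const, Matrix.of_apply, Fin.succ_zero_eq_one,
        Fin.succ_one_eq_two]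
          ring
      case neg =>
        have s21 : G.Adj v2 v1 := h12.symm
        have s51 : G.Adj v5 v1 := h15.symm
        have m52 : ¬G.Adj v5 v2 := fun hh => h25 hh.symm
        refine master G h2 ![v0,v1,v2,v3,v4,v5]
            !![0,1,1,0,0,0; 1,0,1,0,1,1; 1,1,0,0,0,0; 0,0,0,0,0,1; 0,1,0,0,0,1; 0,1,0,1,1,0]
            ?_ ?_ ![![1,1,0,0,0,0],![-1,1,-1,0,2,0],![1,-1,1,4,-3,1]] (2 : ℝ) (2 : ℝ) (4 : ℝ)
            (by norm_num) (by norm_num) (by norm_num) ?_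
        · intro i j h
          fin_cases i <;> fin_cases j <;>
            first | rfl | exact absurd h (G.irrefl) | exact absurd h (by assumption)
        · intro i j h
          fin_cases i <;> fin_cases j <;>
            first | rfl | exact absurd (by assumption) h
        · intro c
          simp only [Fin.sum_univ_succ, Fin.sum_univ_zero, Matrix.cons_val_zero, Matrix.cons_val_one,
        Matrix.head_cons, Matrix.cons_val_succ, Matrix.cons_val', Matrix.empty_val',
        Matrix.cons_val_fin_one, Matrix.head_fin_const, Matrix.of_apply, Fin.succ_zero_eq_one,
        Fin.succ_one_eq_two]
          ring
    case neg =>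
      by_cases h25 : G.Adj v2 v5
      case pos =>
        have s21 : G.Adj v2 v1 := h12.symm
        have m51 : ¬G.Adj v5 v1 := fun hh => h15 hh.symm
        have s52 : G.Adj v5 v2 := h25.symm
        refine master G h2 ![v0,v1,v2,v3,v4,v5]
            !![0,1,1,0,0,0; 1,0,1,0,1,0; 1,1,0,0,0,1; 0,0,0,0,0,1; 0,1,0,0,0,1; 0,0,1,1,1,0]
            ?_ ?_ ![![1,1,0,0,0,0],![-1,1,-1,0,2,0],![0,-1,1,1,-1,1]] (2 : ℝ) (2 : ℝ) (2 : ℝ)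
            (by norm_num) (by norm_num) (by norm_num) ?_
        · intro i j h
          fin_cases i <;> fin_cases j <;>
            first | rfl | exact absurd h (G.irrefl) | exact absurd h (by assumption)
        · intro i j h
          fin_cases i <;> fin_cases j <;>
            first | rfl | exact absurd (by assumption) h
        · intro c
          simp only [Fin.sum_univ_succ, Fin.sum_univ_zero, Matrix.cons_val_zero, Matrix.cons_val_one,
        Matrix.head_cons, Matrix.cons_val_succ, Matrix.cons_val', Matrix.empty_val',
        Matrix.cons_val_fin_one, Matrix.head_fin_const, Matrix.of_apply, Fin.succ_zero_eq_one,
        Fin.succ_one_eq_two]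
          ring
      case neg =>
        have s21 : G.Adj v2 v1 := h12.symm
        have m51 : ¬G.Adj v5 v1 := fun hh => h15 hh.symm
        have m52 : ¬G.Adj v5 v2 := fun hh => h25 hh.symm
        refine master G h2 ![v0,v1,v2,v3,v4,v5]
            !![0,1,1,0,0,0; 1,0,1,0,1,0; 1,1,0,0,0,0; 0,0,0,0,0,1; 0,1,0,0,0,1; 0,0,0,1,1,0]
            ?_ ?_ ![![1,1,0,0,0,0],![-1,1,-1,0,2,0],![1,-1,1,2,-2,1]] (2 : ℝ) (2 : ℝ) (2 : ℝ)
            (by norm_num) (by norm_num) (by norm_num) ?_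
        · intro i j h
          fin_cases i <;> fin_cases j <;>
            first | rfl | exact absurd h (G.irrefl) | exact absurd h (by assumption)
        · intro i j h
          fin_cases i <;> fin_cases j <;>
            first | rfl | exact absurd (by assumption) h
        · intro c
          simp only [Fin.sum_univ_succ, Fin.sum_univ_zero, Matrix.cons_val_zero, Matrix.cons_val_one,
        Matrix.head_cons, Matrix.cons_val_succ, Matrix.cons_val', Matrix.empty_val',
        Matrix.cons_val_fin_one, Matrix.head_fin_const, Matrix.of_apply, Fin.succ_zero_eq_one,
        Fin.succ_one_eq_two]
          ring
  case neg =>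
    by_cases h15 : G.Adj v1 v5
    case pos =>
      by_cases h25 : G.Adj v2 v5
      case pos =>
        have m21 : ¬G.Adj v2 v1 := fun hh => h12 hh.symm
        have s51 : G.Adj v5 v1 := h15.symm
        have s52 : G.Adj v5 v2 := h25.symm
        refine master G h2 ![v0,v1,v2,v3,v4,v5]
            !![0,1,1,0,0,0; 1,0,0,0,1,1; 1,0,0,0,0,1; 0,0,0,0,0,1; 0,1,0,0,0,1; 0,1,1,1,1,0]
            ?_ ?_ ![![1,1,0,0,0,0],![-1,1,-1,0,1,0],![-1,-1,1,1,0,1]] (2 : ℝ) (2 : ℝ) (2 : ℝ)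
            (by norm_num) (by norm_num) (by norm_num) ?_
        · intro i j h
          fin_cases i <;> fin_cases j <;>
            first | rfl | exact absurd h (G.irrefl) | exact absurd h (by assumption)
        · intro i j h
          fin_cases i <;> fin_cases j <;>
            first | rfl | exact absurd (by assumption) h
        · intro c
          simp only [Fin.sum_univ_succ, Fin.sum_univ_zero, Matrix.cons_val_zero, Matrix.cons_val_one,
        Matrix.head_cons, Matrix.cons_val_succ, Matrix.cons_val', Matrix.empty_val',
        Matrix.cons_val_fin_one, Matrix.head_fin_const, Matrix.of_apply, Fin.succ_zero_eq_one,
        Fin.succ_one_eq_two]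
          ring
      case neg =>
        have m21 : ¬G.Adj v2 v1 := fun hh => h12 hh.symm
        have s51 : G.Adj v5 v1 := h15.symm
        have m52 : ¬G.Adj v5 v2 := fun hh => h25 hh.symm
        refine master G h2 ![v0,v1,v2,v3,v4,v5]
            !![0,1,1,0,0,0; 1,0,0,0,1,1; 1,0,0,0,0,0; 0,0,0,0,0,1; 0,1,0,0,0,1; 0,1,0,1,1,0]
            ?_ ?_ ![![1,1,0,0,0,0],![-1,1,-1,0,1,0],![0,-1,1,2,-1,1]] (2 : ℝ) (2 : ℝ) (2 : ℝ)
            (by norm_num) (by norm_num) (by norm_num) ?_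
        · intro i j h
          fin_cases i <;> fin_cases j <;>
            first | rfl | exact absurd h (G.irrefl) | exact absurd h (by assumption)
        · intro i j h
          fin_cases i <;> fin_cases j <;>
            first | rfl | exact absurd (by assumption) h
        · intro c
          simp only [Fin.sum_univ_succ, Fin.sum_univ_zero, Matrix.cons_val_zero, Matrix.cons_val_one,
        Matrix.head_cons, Matrix.cons_val_succ, Matrix.cons_val', Matrix.empty_val',
        Matrix.cons_val_fin_one, Matrix.head_fin_const, Matrix.of_apply, Fin.succ_zero_eq_one,
        Fin.succ_one_eq_two]
          ring
    case neg =>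
      by_cases h25 : G.Adj v2 v5
      case pos =>
        have m21 : ¬G.Adj v2 v1 := fun hh => h12 hh.symm
        have m51 : ¬G.Adj v5 v1 := fun hh => h15 hh.symm
        have s52 : G.Adj v5 v2 := h25.symm
        refine master G h2 ![v0,v1,v2,v3,v4,v5]
            !![0,1,1,0,0,0; 1,0,0,0,1,0; 1,0,0,0,0,1; 0,0,0,0,0,1; 0,1,0,0,0,1; 0,0,1,1,1,0]
            ?_ ?_ ![![1,1,0,0,0,0],![-1,1,-1,0,1,0],![-1,-1,1,0,1,1]] (2 : ℝ) (2 : ℝ) (2 : ℝ)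
            (by norm_num) (by norm_num) (by norm_num) ?_
        · intro i j h
          fin_cases i <;> fin_cases j <;>
            first | rfl | exact absurd h (G.irrefl) | exact absurd h (by assumption)
        · intro i j h
          fin_cases i <;> fin_cases j <;>
            first | rfl | exact absurd (by assumption) h
        · intro c
          simp only [Fin.sum_univ_succ, Fin.sum_univ_zero, Matrix.cons_val_zero, Matrix.cons_val_one,
        Matrix.head_cons, Matrix.cons_val_succ, Matrix.cons_val', Matrix.empty_val',
        Matrix.cons_val_fin_one, Matrix.head_fin_const, Matrix.of_apply, Fin.succ_zero_eq_one,
        Fin.succ_one_eq_two]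
          ring
      case neg =>
        have m21 : ¬G.Adj v2 v1 := fun hh => h12 hh.symm
        have m51 : ¬G.Adj v5 v1 := fun hh => h15 hh.symm
        have m52 : ¬G.Adj v5 v2 := fun hh => h25 hh.symm
        refine master G h2 ![v0,v1,v2,v3,v4,v5]
            !![0,1,1,0,0,0; 1,0,0,0,1,0; 1,0,0,0,0,0; 0,0,0,0,0,1; 0,1,0,0,0,1; 0,0,0,1,1,0]
            ?_ ?_ ![![1,1,0,0,0,0],![-1,1,-1,0,1,0],![0,-1,1,1,0,1]] (2 : ℝ) (2 : ℝ) (2 : ℝ)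
            (by norm_num) (by norm_num) (by norm_num) ?_
        · intro i j h
          fin_cases i <;> fin_cases j <;>
            first | rfl | exact absurd h (G.irrefl) | exact absurd h (by assumption)
        · intro i j h
          fin_cases i <;> fin_cases j <;>
            first | rfl | exact absurd (by assumption) h
        · intro c
          simp only [Fin.sum_univ_succ, Fin.sum_univ_zero, Matrix.cons_val_zero, Matrix.cons_val_one,
        Matrix.head_cons, Matrix.cons_val_succ, Matrix.cons_val', Matrix.empty_val',
        Matrix.cons_val_fin_one, Matrix.head_fin_const, Matrix.of_apply, Fin.succ_zero_eq_one,
        Fin.succ_one_eq_two]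
          ring

theorem Y_multipartite_IItype {n s : ℕ} (hs : 2 ≤ s) (hsn : s ≤ n - 3)
    (G : SimpleGraph (Fin n)) (hconn : G.Connected) (hG : memClass s G)
    (v : Fin n) (hv : IsMinDegVertex G v)
    (X Y : Set (Fin n)) (hX : X = G.neighborSet v) (hY : Y = Yset G v)
    (hstr : ∃ (l : ℕ) (nn : Fin l → ℕ), 2 ≤ l ∧ (∀ i, 1 ≤ nn i) ∧
      Nonempty ((G.induce Y) ≃g (SimpleGraph.completeMultipartiteGraph fun i => Fin (nn i))))
    (y y' : Fin n) (hy : y ∈ Y) (hy' : y' ∈ Y) (hne : y ≠ y') (hnadj : ¬ G.Adj y y')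
    (hdiff : ((G.neighborSet y' ∩ X) \ (G.neighborSet y ∩ X)).Nonempty) :
    G.neighborSet y ∩ X = ∅ ∧ G.neighborSet y' ∩ X = X ∧
    Disjoint (G.neighborSet v) (G.neighborSet y) ∧
    G.neighborSet y' = G.neighborSet v ∪ G.neighborSet y ∧
    IITypeVertex G y' := by
  obtain ⟨hp2, -⟩ := hG
  have hYmem : ∀ z, z ∈ Y ↔ (¬ G.Adj v z ∧ z ≠ v) := by
    intro z
    rw [hY]
    simp only [Yset, Set.mem_compl_iff, Set.mem_union, Set.mem_singleton_iff,
      SimpleGraph.mem_neighborSet]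
    tauto
  have hXmem : ∀ z, z ∈ X ↔ G.Adj v z := by
    intro z; rw [hX]; rfl
  have hvy : ¬ G.Adj v y := ((hYmem y).1 hy).1
  have hvy' : ¬ G.Adj v y' := ((hYmem y').1 hy').1
  -- the distinguished vertex x ∈ N(y') ∩ X \ N(y)
  obtain ⟨x, hxmem⟩ := hdiff
  obtain ⟨⟨hy'x, hxX⟩, hnyx⟩ := hxmem
  have hy'x : G.Adj y' x := hy'x
  have hvx : G.Adj v x := (hXmem x).1 hxX
  have hyx : ¬ G.Adj y x := fun h => hnyx ⟨h, hxX⟩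
  -- multipartite structure
  obtain ⟨l, nn, hl2, hnn1, ⟨φ⟩⟩ := hstr
  have hIadj : ∀ (a b : Y), (G.induce Y).Adj a b ↔ G.Adj a b := fun a b => Iff.rfl
  have hadj_iff : ∀ (a b : Y), G.Adj a b ↔ (φ a).1 ≠ (φ b).1 := by
    intro a b
    rw [← hIadj, ← φ.map_adj_iff]
    simp
  have hpart : ∀ (a b : Y), (¬ G.Adj a b) → (φ a).1 = (φ b).1 := by
    intro a b hab
    by_contra hne'
    exact hab ((hadj_iff a b).2 hne')
  have hsame : (φ ⟨y, hy⟩).1 = (φ ⟨y', hy'⟩).1 := hpart _ _ hnadj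
  -- choose a vertex in another part
  have hl2' : ∃ i0 : Fin l, i0 ≠ (φ ⟨y, hy⟩).1 := by
    rcases Decidable.eq_or_ne (⟨0, by omega⟩ : Fin l) (φ ⟨y, hy⟩).1 with h | h
    · exact ⟨⟨1, by omega⟩, by rw [← h]; intro hh; exact absurd (congrArg Fin.val hh) (by norm_num)⟩
    · exact ⟨_, h⟩
  obtain ⟨i0, hi0⟩ := hl2'
  set yc : Y := φ.symm ⟨i0, ⟨0, hnn1 i0⟩⟩ with hyc
  have hycpart : (φ yc).1 = i0 := by rw [hyc]; simp
  have a35 : G.Adj y (yc : Fin n) := by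
    have h := (hadj_iff ⟨y, hy⟩ yc).2 (by rw [hycpart]; exact fun h => hi0 h.symm)
    exact h
  have a45 : G.Adj y' (yc : Fin n) := by
    have h := (hadj_iff ⟨y', hy'⟩ yc).2 (by rw [hycpart, ← hsame]; exact fun h => hi0 h.symm)
    exact h
  have hvyc : ¬ G.Adj v (yc : Fin n) := ((hYmem _).1 yc.2).1
  -- same Y-neighbourhoods of y and y'
  have hYnbr : ∀ z, z ∈ Y → (G.Adj y z ↔ G.Adj y' z) := by
    intro z hz
    rw [show G.Adj y z ↔ G.Adj (⟨y, hy⟩ : Y) (⟨z, hz⟩ : Y) from Iff.rfl,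
        show G.Adj y' z ↔ G.Adj (⟨y', hy'⟩ : Y) (⟨z, hz⟩ : Y) from Iff.rfl,
        hadj_iff, hadj_iff, hsame]
  -- Part 1
  have part1 : G.neighborSet y ∩ X = ∅ := by
    by_contra hne0
    obtain ⟨x0, hx0⟩ := Set.nonempty_iff_ne_empty.2 hne0
    obtain ⟨hyx0, hx0X⟩ := hx0
    have hyx0 : G.Adj y x0 := hyx0
    have hvx0 : G.Adj v x0 := (hXmem x0).1 hx0X
    exact configA G hp2 v x x0 y y' (yc : Fin n) hvx hvx0 (hy'x.symm) (hyx0.symm) a35 a45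
      (fun h => hyx h.symm) hnadj hvy hvy' hvyc
  -- Part 2
  have part2 : G.neighborSet y' ∩ X = X := by
    apply Set.eq_of_subset_of_subset Set.inter_subset_right
    intro x1 hx1X
    have hvx1 : G.Adj v x1 := (hXmem x1).1 hx1X
    refine ⟨?_, hx1X⟩
    by_contra hno
    have hno : ¬ G.Adj y' x1 := hno
    have hnyx1 : ¬ G.Adj y x1 := by
      intro h
      have : x1 ∈ G.neighborSet y ∩ X := ⟨h, hx1X⟩
      rw [part1] at this
      exact this
    exact configB G hp2 v x x1 y y' (yc : Fin n) hvx hvx1 (hy'x.symm) a35 a45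
      (fun h => hyx h.symm) (fun h => hnyx1 h.symm) (fun h => hno h.symm)
      hnadj hvy hvy' hvyc
  -- Part 3
  have part3 : Disjoint (G.neighborSet v) (G.neighborSet y) := by
    rw [Set.disjoint_left]
    intro z hzv hzy
    have : z ∈ G.neighborSet y ∩ X := ⟨hzy, (hXmem z).2 hzv⟩
    rw [part1] at this
    exact this
  -- Part 4
  have part4 : G.neighborSet y' = G.neighborSet v ∪ G.neighborSet y := by
    ext z
    simp only [Set.mem_union, SimpleGraph.mem_neighborSet]
    constructor
    · intro hz
      by_cases hzY : z ∈ Y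
      · exact Or.inr ((hYnbr z hzY).2 hz)
      · rw [hYmem] at hzY
        push_neg at hzY
        rcases Decidable.eq_or_ne z v with rfl | hzv
        · exact absurd hz.symm hvy'
        · left
          by_contra hnadjvz
          exact hzv (hzY hnadjvz)
    · rintro (hz | hz)
      · have : z ∈ G.neighborSet y' ∩ X := by
          rw [part2]; exact (hXmem z).2 hz
        exact this.1
      · have hzY : z ∈ Y := by
          rw [hYmem]
          constructor
          · intro hvz
            have : z ∈ G.neighborSet y ∩ X := ⟨hz, (hXmem z).2 hvz⟩
            rw [part1] at this
            exact this
          · rintro rfl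
            exact hvy hz.symm
        exact (hYnbr z hzY).1 hz
  exact ⟨part1, part2, part3, part4, v, y,
    fun h => ((hYmem y).1 hy).2 h.symm, hvy, part3, part4⟩

end TwoPosEig
end

section
/- Let G ∈ 𝒞𝒢^s(n) with 2 ≤ s ≤ n−3, let v* be a vertex of minimum degree t of G, set X = N(v*), Y = V(G) ∖ N[v*], and suppose G[Y] ≅ K_{n−t−1} with n−t−1 ≥ 2 while G[X] is not complete. If x, x' ∈ X are non-adjacent, then N_Y(x) ⊆ N_Y(x') or N_Y(x') ⊆ N_Y(x); furthermore, if N_Y(x) ⊊ N_Y(x'), then |N_Y(x)| = 1 and N_Y(x') = Y. -/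
open Matrix BigOperators

namespace TwoPosEig

variable {V : Type*}

/-! ### Auxiliary lemmas -/

lemma dot_eq_inner {n : ℕ} (a b : EuclideanSpace ℝ (Fin n)) :
    (WithLp.equiv 2 _ a) ⬝ᵥ (WithLp.equiv 2 _ b) = (inner ℝ a b : ℝ) := by
  simp [PiLp.inner_apply, dotProduct, WithLp.equiv, mul_comm]

lemma three_le_of_posdef {n : ℕ} (G : SimpleGraph (Fin n)) (f : Fin 3 → (Fin n → ℝ))
    (hpos : ∀ c : Fin 3 → ℝ, c ≠ 0 →
      0 < (∑ i, c i • f i) ⬝ᵥ (adjMat G *ᵥ ∑ i, c i • f i)) :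
    3 ≤ Nat.card {i : Fin n // 0 < eigs G i} := by
  classical
  by_contra hlt
  push_neg at hlt
  set A := adjMat G with hAdef
  have hA := adjMat_isHermitian G
  set B := hA.eigenvectorBasis with hBdef
  set P : Finset (Fin n) := Finset.univ.filter (fun i => 0 < eigs G i) with hPdef
  have hPcard : P.card ≤ 2 := by
    have : Nat.card {i : Fin n // 0 < eigs G i} = P.card := by
      rw [Nat.card_eq_fintype_card, Fintype.card_subtype]
    omega
  set U : Submodule ℝ (EuclideanSpace ℝ (Fin n)) :=
    Submodule.span ℝ ((P.image (fun i => B i) : Finset (EuclideanSpace ℝ (Fin n))) : Set _) with hUdef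
  have hUrank : Module.finrank ℝ U ≤ 2 :=
    le_trans (finrank_span_finset_le_card _) (le_trans (Finset.card_image_le) hPcard)
  set g : Fin 3 → EuclideanSpace ℝ (Fin n) := fun i => (WithLp.equiv 2 _).symm (f i) with hgdef
  have hgsum : ∀ c : Fin 3 → ℝ, (WithLp.equiv 2 _) (∑ i, c i • g i) = ∑ i, c i • f i := by
    intro c; rfl
  have hlin : LinearIndependent ℝ g := by
    rw [Fintype.linearIndependent_iff]
    intro c hc
    by_contra hne
    push_neg at hne
    obtain ⟨i, hi⟩ := hne
    have hcne : c ≠ 0 := by intro h; exact hi (congrFun h i)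
    have := hpos c hcne
    have h0 : (∑ i, c i • f i) = 0 := by
      rw [← hgsum, hc]; rfl
    rw [h0] at this
    simp at this
  set W : Submodule ℝ (EuclideanSpace ℝ (Fin n)) := Submodule.span ℝ (Set.range g) with hWdef
  have hWrank : Module.finrank ℝ W = 3 := by
    rw [finrank_span_eq_card hlin, Fintype.card_fin]
  have hdim : 0 < Module.finrank ℝ (Uᗮ ⊓ W : Submodule ℝ (EuclideanSpace ℝ (Fin n))) := by
    have h1 := Submodule.finrank_sup_add_finrank_inf_eq (Uᗮ) W
    have h2 := Submodule.finrank_add_finrank_orthogonal (𝕜 := ℝ) (E := EuclideanSpace ℝ (Fin n)) U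
    have h3 : Module.finrank ℝ (EuclideanSpace ℝ (Fin n)) = n := by
      simp [finrank_euclideanSpace]
    have h4 : Module.finrank ℝ (Uᗮ ⊔ W : Submodule ℝ (EuclideanSpace ℝ (Fin n)))
        ≤ Module.finrank ℝ (EuclideanSpace ℝ (Fin n)) := Submodule.finrank_le _
      
    omega
  obtain ⟨w, hwne⟩ := Module.finrank_pos_iff_exists_ne_zero.mp hdim
  have hwU : (w : EuclideanSpace ℝ (Fin n)) ∈ Uᗮ := w.2.1
  have hwW : (w : EuclideanSpace ℝ (Fin n)) ∈ W := w.2.2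
  have hwne0 : (w : EuclideanSpace ℝ (Fin n)) ≠ 0 := by
    simpa [Submodule.coe_eq_zero] using hwne
  obtain ⟨c, hc⟩ := (Submodule.mem_span_range_iff_exists_fun ℝ).mp hwW
  have hcne : c ≠ 0 := by
    intro h; apply hwne0; rw [← hc, h]; simp
  set wv : EuclideanSpace ℝ (Fin n) := (w : EuclideanSpace ℝ (Fin n)) with hwv
  have hfw : (∑ i, c i • f i) = WithLp.equiv 2 _ wv := by rw [← hgsum, hc]
  have hposw : 0 < (WithLp.equiv 2 _ wv) ⬝ᵥ (A *ᵥ (WithLp.equiv 2 _ wv)) := by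
    rw [← hfw]; exact hpos c hcne
  set d : Fin n → ℝ := fun i => (inner ℝ (B i) wv : ℝ) with hddef
  have hd0 : ∀ i ∈ P, d i = 0 := by
    intro i hi
    have hBU : B i ∈ U := Submodule.subset_span (by
      simp only [Finset.coe_image, Set.mem_image, Finset.mem_coe]
      exact ⟨i, hi, rfl⟩)
    have := (Submodule.mem_orthogonal U wv).mp hwU (B i) hBU
    simpa [hddef] using this
  have hrepr : wv = ∑ i, d i • B i := by
    conv_lhs => rw [← B.sum_repr' wv]
  have hmul : A *ᵥ (WithLp.equiv 2 _ wv) =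
      WithLp.equiv 2 _ (∑ i, (d i * (hA.eigenvalues i)) • B i) := by
    conv_lhs => rw [hrepr]
    simp only [WithLp.equiv_apply, WithLp.ofLp_sum, WithLp.ofLp_smul]
    show A.mulVecLin (∑ i, d i • (WithLp.equiv 2 _ (B i))) = _
    rw [map_sum]
    show _ = ∑ i, (d i * hA.eigenvalues i) • (WithLp.equiv 2 _ (B i))
    refine Finset.sum_congr rfl fun i _ => ?_
    rw [_root_.map_smul]
    show d i • (adjMat G *ᵥ (B i).ofLp) = _
    rw [hA.mulVec_eigenvectorBasis i, smul_smul]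
    rfl
  have hval : (WithLp.equiv 2 _ wv) ⬝ᵥ (A *ᵥ (WithLp.equiv 2 _ wv))
      = ∑ i, d i * (d i * hA.eigenvalues i) := by
    rw [hmul, dot_eq_inner]
    conv_lhs => rw [hrepr]
    have := B.orthonormal.inner_sum d (fun i => d i * hA.eigenvalues i) Finset.univ
    simpa using this
  have hnonpos : ∑ i, d i * (d i * hA.eigenvalues i) ≤ 0 := by
    apply Finset.sum_nonpos
    intro i _
    by_cases hiP : i ∈ P
    · rw [hd0 i hiP]; simp
    · have : ¬ 0 < eigs G i := by simpa [hPdef] using hiP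
      have hle : hA.eigenvalues i ≤ 0 := not_lt.mp this
      nlinarith [sq_nonneg (d i)]
  rw [hval] at hposw
  linarith

lemma three_le_posCount {n : ℕ} (G : SimpleGraph (Fin n)) (f : Fin 3 → (Fin n → ℝ))
    (hpos : ∀ c : Fin 3 → ℝ, c ≠ 0 →
      0 < (∑ i, c i • f i) ⬝ᵥ (adjMat G *ᵥ ∑ i, c i • f i)) :
    3 ≤ posCount G := by
  have h := three_le_of_posdef G f hpos
  unfold posCount
  have e1 : Fintype.ofFinite (Fin n) = (inferInstance : Fintype (Fin n)) := Subsingleton.elim _ _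
  have e2 : Classical.decEq (Fin n) = (inferInstance : DecidableEq (Fin n)) := Subsingleton.elim _ _
  rw [e1, e2]
  exact h


lemma form_comb {n k : ℕ} (A : Matrix (Fin n) (Fin n) ℝ) (vs : Fin k → Fin n) (b : Fin k → ℝ) :
    (∑ j, b j • (Pi.single (vs j) 1 : Fin n → ℝ)) ⬝ᵥ (A *ᵥ ∑ j, b j • (Pi.single (vs j) 1 : Fin n → ℝ))
      = ∑ j, ∑ l, b j * (A (vs j) (vs l) * b l) := by
  have hmv : (A *ᵥ ∑ l, b l • (Pi.single (vs l) 1 : Fin n → ℝ)) = ∑ l, b l • fun i => A i (vs l) := by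
    show A.mulVecLin _ = _
    rw [map_sum]
    refine Finset.sum_congr rfl fun l _ => ?_
    rw [_root_.map_smul]
    congr 1
    show A *ᵥ Pi.single (vs l) 1 = _
    rw [Matrix.mulVec_single]
    simp
    rfl
  rw [hmv]
  simp only [dotProduct, Finset.sum_apply, Pi.smul_apply, smul_eq_mul, Pi.single_apply,
    mul_ite, mul_one, mul_zero, ite_mul, zero_mul, Finset.sum_mul, Finset.mul_sum]
  conv_lhs => rw [Finset.sum_comm]
  conv_rhs => rw [Finset.sum_comm]
  refine Finset.sum_congr rfl fun j _ => ?_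
  conv_lhs => rw [Finset.sum_comm]
  refine Finset.sum_congr rfl fun l _ => ?_
  rw [Finset.sum_ite_eq' Finset.univ (vs l)]
  simp only [Finset.mem_univ, if_true]
  ring


lemma adjMat_one {n : ℕ} (G : SimpleGraph (Fin n)) {u w : Fin n} (h : G.Adj u w) :
    adjMat G u w = 1 := by
  simp only [adjMat, SimpleGraph.adjMatrix_apply, if_pos h]

lemma adjMat_zero {n : ℕ} (G : SimpleGraph (Fin n)) {u w : Fin n} (h : ¬ G.Adj u w) :
    adjMat G u w = 0 := by
  simp only [adjMat, SimpleGraph.adjMatrix_apply, if_neg h]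

lemma adjMat_diag {n : ℕ} (G : SimpleGraph (Fin n)) (u : Fin n) :
    adjMat G u u = 0 := adjMat_zero G (G.irrefl)


lemma pos_comb (a b d : ℝ) (ha : 0 < a) (hb : 0 < b) (hd : 0 < d) (c : Fin 3 → ℝ) (hc : c ≠ 0) :
    0 < a * c 0 ^ 2 + b * c 1 ^ 2 + d * c 2 ^ 2 := by
  have t0 : 0 ≤ a * c 0 ^ 2 := mul_nonneg ha.le (sq_nonneg _)
  have t1 : 0 ≤ b * c 1 ^ 2 := mul_nonneg hb.le (sq_nonneg _)
  have t2 : 0 ≤ d * c 2 ^ 2 := mul_nonneg hd.le (sq_nonneg _)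
  have hx : c 0 ≠ 0 ∨ c 1 ≠ 0 ∨ c 2 ≠ 0 := by
    by_contra h
    push_neg at h
    apply hc
    funext i
    match i with
    | 0 => exact h.1
    | 1 => exact h.2.1
    | 2 => exact h.2.2
  rcases hx with h|h|h
  · have := mul_pos ha (sq_pos_of_ne_zero h); linarith
  · have := mul_pos hb (sq_pos_of_ne_zero h); linarith
  · have := mul_pos hd (sq_pos_of_ne_zero h); linarith

set_option maxHeartbeats 1000000 in
lemma forbid5 {n : ℕ} (G : SimpleGraph (Fin n)) (hG : posCount G = 2)
    (v0 v1 v2 v3 v4 : Fin n)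
    (p01 : G.Adj v0 v1)
    (p02 : ¬ G.Adj v0 v2)
    (p03 : ¬ G.Adj v0 v3)
    (p04 : G.Adj v0 v4)
    (p12 : G.Adj v1 v2)
    (p13 : ¬ G.Adj v1 v3)
    (p14 : ¬ G.Adj v1 v4)
    (p23 : G.Adj v2 v3)
    (p24 : ¬ G.Adj v2 v4)
    (p34 : G.Adj v3 v4)
    : False := by
  set M : Fin 3 → Fin 5 → ℝ := ![![1,1,1,1,1],![12,7,-7,-12,0],![-19,51,51,-19,-64]] with hM
  set vv : Fin 5 → Fin n := ![v0,v1,v2,v3,v4] with hvv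
  have h3 := three_le_posCount G (fun i => ∑ j, (M i j) • (Pi.single (vv j) 1 : Fin n → ℝ)) ?_
  · omega
  intro c hc
  have hx : (∑ i, c i • (fun i => ∑ j, (M i j) • (Pi.single (vv j) 1 : Fin n → ℝ)) i)
      = ∑ j, (∑ i, c i * M i j) • (Pi.single (vv j) 1 : Fin n → ℝ) := by
    simp only [Finset.smul_sum, smul_smul]
    rw [Finset.sum_comm]
    simp only [Finset.sum_smul]
  rw [hx, form_comb]
  have hv0 : vv 0 = v0 := rfl
  have hv1 : vv 1 = v1 := rfl
  have hv2 : vv 2 = v2 := rfl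
  have hv3 : vv 3 = v3 := rfl
  have hv4 : vv 4 = v4 := rfl
  have hm00 : M 0 0 = (1 : ℝ) := rfl
  have hm01 : M 0 1 = (1 : ℝ) := rfl
  have hm02 : M 0 2 = (1 : ℝ) := rfl
  have hm03 : M 0 3 = (1 : ℝ) := rfl
  have hm04 : M 0 4 = (1 : ℝ) := rfl
  have hm10 : M 1 0 = (12 : ℝ) := rfl
  have hm11 : M 1 1 = (7 : ℝ) := rfl
  have hm12 : M 1 2 = (-7 : ℝ) := rfl
  have hm13 : M 1 3 = (-12 : ℝ) := rfl
  have hm14 : M 1 4 = (0 : ℝ) := rfl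
  have hm20 : M 2 0 = (-19 : ℝ) := rfl
  have hm21 : M 2 1 = (51 : ℝ) := rfl
  have hm22 : M 2 2 = (51 : ℝ) := rfl
  have hm23 : M 2 3 = (-19 : ℝ) := rfl
  have hm24 : M 2 4 = (-64 : ℝ) := rfl
  have E00 : adjMat G v0 v0 = 0 := adjMat_diag G _
  have E01 : adjMat G v0 v1 = 1 := adjMat_one G p01
  have E02 : adjMat G v0 v2 = 0 := adjMat_zero G p02
  have E03 : adjMat G v0 v3 = 0 := adjMat_zero G p03
  have E04 : adjMat G v0 v4 = 1 := adjMat_one G p04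
  have E10 : adjMat G v1 v0 = 1 := adjMat_one G (G.adj_symm p01)
  have E11 : adjMat G v1 v1 = 0 := adjMat_diag G _
  have E12 : adjMat G v1 v2 = 1 := adjMat_one G p12
  have E13 : adjMat G v1 v3 = 0 := adjMat_zero G p13
  have E14 : adjMat G v1 v4 = 0 := adjMat_zero G p14
  have E20 : adjMat G v2 v0 = 0 := adjMat_zero G (fun h => p02 (G.adj_symm h))
  have E21 : adjMat G v2 v1 = 1 := adjMat_one G (G.adj_symm p12)
  have E22 : adjMat G v2 v2 = 0 := adjMat_diag G _
  have E23 : adjMat G v2 v3 = 1 := adjMat_one G p23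
  have E24 : adjMat G v2 v4 = 0 := adjMat_zero G p24
  have E30 : adjMat G v3 v0 = 0 := adjMat_zero G (fun h => p03 (G.adj_symm h))
  have E31 : adjMat G v3 v1 = 0 := adjMat_zero G (fun h => p13 (G.adj_symm h))
  have E32 : adjMat G v3 v2 = 1 := adjMat_one G (G.adj_symm p23)
  have E33 : adjMat G v3 v3 = 0 := adjMat_diag G _
  have E34 : adjMat G v3 v4 = 1 := adjMat_one G p34
  have E40 : adjMat G v4 v0 = 1 := adjMat_one G (G.adj_symm p04)
  have E41 : adjMat G v4 v1 = 0 := adjMat_zero G (fun h => p14 (G.adj_symm h))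
  have E42 : adjMat G v4 v2 = 0 := adjMat_zero G (fun h => p24 (G.adj_symm h))
  have E43 : adjMat G v4 v3 = 1 := adjMat_one G (G.adj_symm p34)
  have E44 : adjMat G v4 v4 = 0 := adjMat_diag G _
  simp only [Fin.sum_univ_five, Fin.sum_univ_three, hv0, hv1, hv2, hv3, hv4, hm00, hm01, hm02, hm03, hm04, hm10, hm11, hm12, hm13, hm14, hm20, hm21, hm22, hm23, hm24, E00, E01, E02, E03, E04, E10, E11, E12, E13, E14, E20, E21, E22, E23, E24, E30, E31, E32, E33, E34, E40, E41, E42, E43, E44]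
  refine lt_of_lt_of_eq (pos_comb 10 238 6190 (by norm_num) (by norm_num) (by norm_num) c hc) ?_
  ring

set_option maxHeartbeats 1000000 in
lemma forbid6a {n : ℕ} (G : SimpleGraph (Fin n)) (hG : posCount G = 2)
    (v0 v1 v2 v3 v4 v5 : Fin n)
    (p01 : G.Adj v0 v1)
    (p02 : G.Adj v0 v2)
    (p03 : ¬ G.Adj v0 v3)
    (p04 : ¬ G.Adj v0 v4)
    (p05 : ¬ G.Adj v0 v5)
    (p12 : ¬ G.Adj v1 v2)
    (p13 : G.Adj v1 v3)
    (p14 : G.Adj v1 v4)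
    (p15 : ¬ G.Adj v1 v5)
    (p23 : G.Adj v2 v3)
    (p24 : G.Adj v2 v4)
    (p25 : G.Adj v2 v5)
    (p34 : G.Adj v3 v4)
    (p35 : G.Adj v3 v5)
    (p45 : G.Adj v4 v5)
    : False := by
  set M : Fin 3 → Fin 6 → ℝ := ![![5,7,9,10,10,8],![6369,5403,-443,-1414,-1414,-4352],![1335924,-1423032,1678896,-804401,-804401,465404]] with hM
  set vv : Fin 6 → Fin n := ![v0,v1,v2,v3,v4,v5] with hvv
  have h3 := three_le_posCount G (fun i => ∑ j, (M i j) • (Pi.single (vv j) 1 : Fin n → ℝ)) ?_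
  · omega
  intro c hc
  have hx : (∑ i, c i • (fun i => ∑ j, (M i j) • (Pi.single (vv j) 1 : Fin n → ℝ)) i)
      = ∑ j, (∑ i, c i * M i j) • (Pi.single (vv j) 1 : Fin n → ℝ) := by
    simp only [Finset.smul_sum, smul_smul]
    rw [Finset.sum_comm]
    simp only [Finset.sum_smul]
  rw [hx, form_comb]
  have hv0 : vv 0 = v0 := rfl
  have hv1 : vv 1 = v1 := rfl
  have hv2 : vv 2 = v2 := rfl
  have hv3 : vv 3 = v3 := rfl
  have hv4 : vv 4 = v4 := rfl
  have hv5 : vv 5 = v5 := rfl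
  have hm00 : M 0 0 = (5 : ℝ) := rfl
  have hm01 : M 0 1 = (7 : ℝ) := rfl
  have hm02 : M 0 2 = (9 : ℝ) := rfl
  have hm03 : M 0 3 = (10 : ℝ) := rfl
  have hm04 : M 0 4 = (10 : ℝ) := rfl
  have hm05 : M 0 5 = (8 : ℝ) := rfl
  have hm10 : M 1 0 = (6369 : ℝ) := rfl
  have hm11 : M 1 1 = (5403 : ℝ) := rfl
  have hm12 : M 1 2 = (-443 : ℝ) := rfl
  have hm13 : M 1 3 = (-1414 : ℝ) := rfl
  have hm14 : M 1 4 = (-1414 : ℝ) := rfl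
  have hm15 : M 1 5 = (-4352 : ℝ) := rfl
  have hm20 : M 2 0 = (1335924 : ℝ) := rfl
  have hm21 : M 2 1 = (-1423032 : ℝ) := rfl
  have hm22 : M 2 2 = (1678896 : ℝ) := rfl
  have hm23 : M 2 3 = (-804401 : ℝ) := rfl
  have hm24 : M 2 4 = (-804401 : ℝ) := rfl
  have hm25 : M 2 5 = (465404 : ℝ) := rfl
  have E00 : adjMat G v0 v0 = 0 := adjMat_diag G _
  have E01 : adjMat G v0 v1 = 1 := adjMat_one G p01
  have E02 : adjMat G v0 v2 = 1 := adjMat_one G p02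
  have E03 : adjMat G v0 v3 = 0 := adjMat_zero G p03
  have E04 : adjMat G v0 v4 = 0 := adjMat_zero G p04
  have E05 : adjMat G v0 v5 = 0 := adjMat_zero G p05
  have E10 : adjMat G v1 v0 = 1 := adjMat_one G (G.adj_symm p01)
  have E11 : adjMat G v1 v1 = 0 := adjMat_diag G _
  have E12 : adjMat G v1 v2 = 0 := adjMat_zero G p12
  have E13 : adjMat G v1 v3 = 1 := adjMat_one G p13
  have E14 : adjMat G v1 v4 = 1 := adjMat_one G p14
  have E15 : adjMat G v1 v5 = 0 := adjMat_zero G p15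
  have E20 : adjMat G v2 v0 = 1 := adjMat_one G (G.adj_symm p02)
  have E21 : adjMat G v2 v1 = 0 := adjMat_zero G (fun h => p12 (G.adj_symm h))
  have E22 : adjMat G v2 v2 = 0 := adjMat_diag G _
  have E23 : adjMat G v2 v3 = 1 := adjMat_one G p23
  have E24 : adjMat G v2 v4 = 1 := adjMat_one G p24
  have E25 : adjMat G v2 v5 = 1 := adjMat_one G p25
  have E30 : adjMat G v3 v0 = 0 := adjMat_zero G (fun h => p03 (G.adj_symm h))
  have E31 : adjMat G v3 v1 = 1 := adjMat_one G (G.adj_symm p13)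
  have E32 : adjMat G v3 v2 = 1 := adjMat_one G (G.adj_symm p23)
  have E33 : adjMat G v3 v3 = 0 := adjMat_diag G _
  have E34 : adjMat G v3 v4 = 1 := adjMat_one G p34
  have E35 : adjMat G v3 v5 = 1 := adjMat_one G p35
  have E40 : adjMat G v4 v0 = 0 := adjMat_zero G (fun h => p04 (G.adj_symm h))
  have E41 : adjMat G v4 v1 = 1 := adjMat_one G (G.adj_symm p14)
  have E42 : adjMat G v4 v2 = 1 := adjMat_one G (G.adj_symm p24)
  have E43 : adjMat G v4 v3 = 1 := adjMat_one G (G.adj_symm p34)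
  have E44 : adjMat G v4 v4 = 0 := adjMat_diag G _
  have E45 : adjMat G v4 v5 = 1 := adjMat_one G p45
  have E50 : adjMat G v5 v0 = 0 := adjMat_zero G (fun h => p05 (G.adj_symm h))
  have E51 : adjMat G v5 v1 = 0 := adjMat_zero G (fun h => p15 (G.adj_symm h))
  have E52 : adjMat G v5 v2 = 1 := adjMat_one G (G.adj_symm p25)
  have E53 : adjMat G v5 v3 = 1 := adjMat_one G (G.adj_symm p35)
  have E54 : adjMat G v5 v4 = 1 := adjMat_one G (G.adj_symm p45)
  have E55 : adjMat G v5 v5 = 0 := adjMat_diag G _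
  simp only [Fin.sum_univ_six, Fin.sum_univ_three, hv0, hv1, hv2, hv3, hv4, hv5, hm00, hm01, hm02, hm03, hm04, hm05, hm10, hm11, hm12, hm13, hm14, hm15, hm20, hm21, hm22, hm23, hm24, hm25, E00, E01, E02, E03, E04, E05, E10, E11, E12, E13, E14, E15, E20, E21, E22, E23, E24, E25, E30, E31, E32, E33, E34, E35, E40, E41, E42, E43, E44, E45, E50, E51, E52, E53, E54, E55]
  refine lt_of_lt_of_eq (pos_comb 1464 67596296 1219726680370 (by norm_num) (by norm_num) (by norm_num) c hc) ?_
  ring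

set_option maxHeartbeats 1000000 in
lemma forbid6b {n : ℕ} (G : SimpleGraph (Fin n)) (hG : posCount G = 2)
    (v0 v1 v2 v3 v4 v5 : Fin n)
    (p01 : G.Adj v0 v1)
    (p02 : G.Adj v0 v2)
    (p03 : ¬ G.Adj v0 v3)
    (p04 : ¬ G.Adj v0 v4)
    (p05 : ¬ G.Adj v0 v5)
    (p12 : ¬ G.Adj v1 v2)
    (p13 : G.Adj v1 v3)
    (p14 : ¬ G.Adj v1 v4)
    (p15 : ¬ G.Adj v1 v5)
    (p23 : G.Adj v2 v3)
    (p24 : G.Adj v2 v4)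
    (p25 : ¬ G.Adj v2 v5)
    (p34 : G.Adj v3 v4)
    (p35 : G.Adj v3 v5)
    (p45 : G.Adj v4 v5)
    : False := by
  set M : Fin 3 → Fin 6 → ℝ := ![![5,6,9,11,9,7],![14565,11206,3369,-2229,-7831,-10073],![-1516462,5769462,-6400576,2823263,-2014465,2865967]] with hM
  set vv : Fin 6 → Fin n := ![v0,v1,v2,v3,v4,v5] with hvv
  have h3 := three_le_posCount G (fun i => ∑ j, (M i j) • (Pi.single (vv j) 1 : Fin n → ℝ)) ?_
  · omega
  intro c hc
  have hx : (∑ i, c i • (fun i => ∑ j, (M i j) • (Pi.single (vv j) 1 : Fin n → ℝ)) i)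
      = ∑ j, (∑ i, c i * M i j) • (Pi.single (vv j) 1 : Fin n → ℝ) := by
    simp only [Finset.smul_sum, smul_smul]
    rw [Finset.sum_comm]
    simp only [Finset.sum_smul]
  rw [hx, form_comb]
  have hv0 : vv 0 = v0 := rfl
  have hv1 : vv 1 = v1 := rfl
  have hv2 : vv 2 = v2 := rfl
  have hv3 : vv 3 = v3 := rfl
  have hv4 : vv 4 = v4 := rfl
  have hv5 : vv 5 = v5 := rfl
  have hm00 : M 0 0 = (5 : ℝ) := rfl
  have hm01 : M 0 1 = (6 : ℝ) := rfl
  have hm02 : M 0 2 = (9 : ℝ) := rfl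
  have hm03 : M 0 3 = (11 : ℝ) := rfl
  have hm04 : M 0 4 = (9 : ℝ) := rfl
  have hm05 : M 0 5 = (7 : ℝ) := rfl
  have hm10 : M 1 0 = (14565 : ℝ) := rfl
  have hm11 : M 1 1 = (11206 : ℝ) := rfl
  have hm12 : M 1 2 = (3369 : ℝ) := rfl
  have hm13 : M 1 3 = (-2229 : ℝ) := rfl
  have hm14 : M 1 4 = (-7831 : ℝ) := rfl
  have hm15 : M 1 5 = (-10073 : ℝ) := rfl
  have hm20 : M 2 0 = (-1516462 : ℝ) := rfl
  have hm21 : M 2 1 = (5769462 : ℝ) := rfl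
  have hm22 : M 2 2 = (-6400576 : ℝ) := rfl
  have hm23 : M 2 3 = (2823263 : ℝ) := rfl
  have hm24 : M 2 4 = (-2014465 : ℝ) := rfl
  have hm25 : M 2 5 = (2865967 : ℝ) := rfl
  have E00 : adjMat G v0 v0 = 0 := adjMat_diag G _
  have E01 : adjMat G v0 v1 = 1 := adjMat_one G p01
  have E02 : adjMat G v0 v2 = 1 := adjMat_one G p02
  have E03 : adjMat G v0 v3 = 0 := adjMat_zero G p03
  have E04 : adjMat G v0 v4 = 0 := adjMat_zero G p04
  have E05 : adjMat G v0 v5 = 0 := adjMat_zero G p05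
  have E10 : adjMat G v1 v0 = 1 := adjMat_one G (G.adj_symm p01)
  have E11 : adjMat G v1 v1 = 0 := adjMat_diag G _
  have E12 : adjMat G v1 v2 = 0 := adjMat_zero G p12
  have E13 : adjMat G v1 v3 = 1 := adjMat_one G p13
  have E14 : adjMat G v1 v4 = 0 := adjMat_zero G p14
  have E15 : adjMat G v1 v5 = 0 := adjMat_zero G p15
  have E20 : adjMat G v2 v0 = 1 := adjMat_one G (G.adj_symm p02)
  have E21 : adjMat G v2 v1 = 0 := adjMat_zero G (fun h => p12 (G.adj_symm h))
  have E22 : adjMat G v2 v2 = 0 := adjMat_diag G _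
  have E23 : adjMat G v2 v3 = 1 := adjMat_one G p23
  have E24 : adjMat G v2 v4 = 1 := adjMat_one G p24
  have E25 : adjMat G v2 v5 = 0 := adjMat_zero G p25
  have E30 : adjMat G v3 v0 = 0 := adjMat_zero G (fun h => p03 (G.adj_symm h))
  have E31 : adjMat G v3 v1 = 1 := adjMat_one G (G.adj_symm p13)
  have E32 : adjMat G v3 v2 = 1 := adjMat_one G (G.adj_symm p23)
  have E33 : adjMat G v3 v3 = 0 := adjMat_diag G _
  have E34 : adjMat G v3 v4 = 1 := adjMat_one G p34
  have E35 : adjMat G v3 v5 = 1 := adjMat_one G p35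
  have E40 : adjMat G v4 v0 = 0 := adjMat_zero G (fun h => p04 (G.adj_symm h))
  have E41 : adjMat G v4 v1 = 0 := adjMat_zero G (fun h => p14 (G.adj_symm h))
  have E42 : adjMat G v4 v2 = 1 := adjMat_one G (G.adj_symm p24)
  have E43 : adjMat G v4 v3 = 1 := adjMat_one G (G.adj_symm p34)
  have E44 : adjMat G v4 v4 = 0 := adjMat_diag G _
  have E45 : adjMat G v4 v5 = 1 := adjMat_one G p45
  have E50 : adjMat G v5 v0 = 0 := adjMat_zero G (fun h => p05 (G.adj_symm h))
  have E51 : adjMat G v5 v1 = 0 := adjMat_zero G (fun h => p15 (G.adj_symm h))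
  have E52 : adjMat G v5 v2 = 0 := adjMat_zero G (fun h => p25 (G.adj_symm h))
  have E53 : adjMat G v5 v3 = 1 := adjMat_one G (G.adj_symm p35)
  have E54 : adjMat G v5 v4 = 1 := adjMat_one G (G.adj_symm p45)
  have E55 : adjMat G v5 v5 = 0 := adjMat_diag G _
  simp only [Fin.sum_univ_six, Fin.sum_univ_three, hv0, hv1, hv2, hv3, hv4, hv5, hm00, hm01, hm02, hm03, hm04, hm05, hm10, hm11, hm12, hm13, hm14, hm15, hm20, hm21, hm22, hm23, hm24, hm25, E00, E01, E02, E03, E04, E05, E10, E11, E12, E13, E14, E15, E20, E21, E22, E23, E24, E25, E30, E31, E32, E33, E34, E35, E40, E41, E42, E43, E44, E45, E50, E51, E52, E53, E54, E55]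
  refine lt_of_lt_of_eq (pos_comb 1120 544408480 17399239607794 (by norm_num) (by norm_num) (by norm_num) c hc) ?_
  ring


theorem Xincomplete_chain {n s : ℕ} (hs : 2 ≤ s) (hsn : s ≤ n - 3)
    (G : SimpleGraph (Fin n)) (hconn : G.Connected) (hG : memClass s G)
    (v : Fin n) (hv : IsMinDegVertex G v)
    (X Y : Set (Fin n)) (hX : X = G.neighborSet v) (hY : Y = Yset G v)
    (hYcl : Y.Pairwise G.Adj) (hYcard : 2 ≤ Y.ncard) (hXinc : ¬ X.Pairwise G.Adj)
    (x x' : Fin n) (hx : x ∈ X) (hx' : x' ∈ X) (hne : x ≠ x') (hnadj : ¬ G.Adj x x') :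
    (G.neighborSet x ∩ Y ⊆ G.neighborSet x' ∩ Y ∨
      G.neighborSet x' ∩ Y ⊆ G.neighborSet x ∩ Y) ∧
    (G.neighborSet x ∩ Y ⊂ G.neighborSet x' ∩ Y →
      (G.neighborSet x ∩ Y).ncard = 1 ∧ G.neighborSet x' ∩ Y = Y) := by
  subst hX
  subst hY
  obtain ⟨hp, -⟩ := hG
  rw [SimpleGraph.mem_neighborSet] at hx hx'
  have hYv : ∀ z, z ∈ Yset G v → ¬ G.Adj v z ∧ z ≠ v := by
    intro z hz
    simp only [Yset, Set.mem_compl_iff, Set.mem_union, SimpleGraph.mem_neighborSet,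
      Set.mem_singleton_iff] at hz
    push_neg at hz
    exact hz
  have claim1 : G.neighborSet x ∩ Yset G v ⊆ G.neighborSet x' ∩ Yset G v ∨
      G.neighborSet x' ∩ Yset G v ⊆ G.neighborSet x ∩ Yset G v := by
    by_contra hcon
    push_neg at hcon
    obtain ⟨h1, h2⟩ := hcon
    obtain ⟨y, hy, hyn⟩ := Set.not_subset.mp h1
    obtain ⟨y', hy', hy'n⟩ := Set.not_subset.mp h2
    have hxy : G.Adj x y := hy.1
    have hyY : y ∈ Yset G v := hy.2
    have hx'y' : G.Adj x' y' := hy'.1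
    have hy'Y : y' ∈ Yset G v := hy'.2
    have hx'y : ¬ G.Adj x' y := fun h => hyn ⟨h, hyY⟩
    have hxy' : ¬ G.Adj x y' := fun h => hy'n ⟨h, hy'Y⟩
    have hyy'ne : y ≠ y' := fun h => hyn (h ▸ hy')
    have hyy' : G.Adj y y' := hYcl hyY hy'Y hyy'ne
    exact forbid5 G hp v x y y' x' hx (hYv y hyY).1 (hYv y' hy'Y).1 hx' hxy hxy' hnadj hyy'
      (fun h => hx'y (G.adj_symm h)) (G.adj_symm hx'y')
  refine ⟨claim1, ?_⟩
  intro hss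
  have hsub := hss.subset
  obtain ⟨y', hy'mem, hy'n⟩ := Set.exists_of_ssubset hss
  have hx'y' : G.Adj x' y' := hy'mem.1
  have hy'Y : y' ∈ Yset G v := hy'mem.2
  have hxy' : ¬ G.Adj x y' := fun h => hy'n ⟨h, hy'Y⟩
  have hne0 : (G.neighborSet x ∩ Yset G v).Nonempty := by
    rw [Set.nonempty_iff_ne_empty]
    intro hemp
    have hsubN : G.neighborSet x ⊆ insert v (G.neighborSet v \ {x, x'}) := by
      intro u hu
      rw [SimpleGraph.mem_neighborSet] at hu
      by_cases huv : u = v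
      · exact Set.mem_insert_iff.mpr (Or.inl huv)
      · have huY : u ∉ Yset G v := by
          intro hYu
          have hmm : u ∈ G.neighborSet x ∩ Yset G v := ⟨hu, hYu⟩
          rw [hemp] at hmm
          exact hmm
        have huNv : u ∈ G.neighborSet v := by
          have hmem : u ∈ G.neighborSet v ∪ {v} := by
            by_contra hnm
            exact huY hnm
          rcases hmem with h | h
          · exact h
          · exact absurd h huv
        refine Set.mem_insert_iff.mpr (Or.inr ⟨huNv, ?_⟩)
        simp only [Set.mem_insert_iff, Set.mem_singleton_iff]
        push_neg
        exact ⟨fun h => G.irrefl (h ▸ hu), fun h => hnadj (h ▸ hu)⟩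
    have hxx'sub : ({x, x'} : Set (Fin n)) ⊆ G.neighborSet v := by
      intro u hu
      rcases hu with rfl | hu
      · exact hx
      · rw [Set.mem_singleton_iff] at hu
        subst hu
        exact hx'
    have hcard2 : ({x, x'} : Set (Fin n)).ncard = 2 := Set.ncard_pair hne
    have h2le : 2 ≤ (G.neighborSet v).ncard := by
      rw [← hcard2]
      exact Set.ncard_le_ncard hxx'sub (Set.toFinite _)
    have hdx : deg G x = (G.neighborSet x).ncard := Nat.card_coe_set_eq _
    have hdv : deg G v = (G.neighborSet v).ncard := Nat.card_coe_set_eq _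
    have hle1 : (G.neighborSet x).ncard ≤ (insert v (G.neighborSet v \ {x, x'})).ncard :=
      Set.ncard_le_ncard hsubN (Set.toFinite _)
    have hle2 : (insert v (G.neighborSet v \ {x, x'})).ncard
        ≤ (G.neighborSet v \ {x, x'}).ncard + 1 := Set.ncard_insert_le _ _
    have hle3 : (G.neighborSet v \ {x, x'}).ncard
        = (G.neighborSet v).ncard - 2 := by
      rw [Set.ncard_diff hxx'sub, hcard2]
    have hmin := hv x
    omega
  obtain ⟨y, hymem⟩ := hne0
  have hxy : G.Adj x y := hymem.1
  have hyY : y ∈ Yset G v := hymem.2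
  have hymem' : y ∈ G.neighborSet x' ∩ Yset G v := hsub hymem
  have hx'y : G.Adj x' y := hymem'.1
  have hyney' : y ≠ y' := fun h => hxy' (h ▸ hxy)
  have hyy' : G.Adj y y' := hYcl hyY hy'Y hyney'
  constructor
  · by_contra hne1
    have hfin : (G.neighborSet x ∩ Yset G v).Finite := Set.toFinite _
    have hposc : 0 < (G.neighborSet x ∩ Yset G v).ncard :=
      (Set.ncard_pos hfin).mpr ⟨y, hymem⟩
    have h1lt : 1 < (G.neighborSet x ∩ Yset G v).ncard := by omega
    obtain ⟨y1, hy1, y2, hy2, hne12⟩ := (Set.one_lt_ncard hfin).mp h1lt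
    have hy1Y : y1 ∈ Yset G v := hy1.2
    have hy2Y : y2 ∈ Yset G v := hy2.2
    have h35 : G.Adj y1 y' := hYcl hy1Y hy'Y (fun h => hxy' (h ▸ hy1.1))
    have h45 : G.Adj y2 y' := hYcl hy2Y hy'Y (fun h => hxy' (h ▸ hy2.1))
    have h34 : G.Adj y1 y2 := hYcl hy1Y hy2Y hne12
    exact forbid6a G hp v x x' y1 y2 y' hx hx' (hYv y1 hy1Y).1 (hYv y2 hy2Y).1
      (hYv y' hy'Y).1 hnadj hy1.1 hy2.1 hxy' (hsub hy1).1 (hsub hy2).1 hx'y' h34 h35 h45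
  · apply Set.Subset.antisymm Set.inter_subset_right
    intro y0 hy0
    refine ⟨?_, hy0⟩
    rw [SimpleGraph.mem_neighborSet]
    by_contra hx'y0
    have hxy0 : ¬ G.Adj x y0 := fun h => hx'y0 (hsub ⟨h, hy0⟩).1
    have hyney0 : y ≠ y0 := fun h => hx'y0 (h ▸ hx'y)
    have hy'ney0 : y' ≠ y0 := fun h => hx'y0 (h ▸ hx'y')
    exact forbid6b G hp v x x' y y' y0 hx hx' (hYv y hyY).1 (hYv y' hy'Y).1
      (hYv y0 hy0).1 hnadj hxy hxy' hxy0 hx'y hx'y' hx'y0 hyy'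
      (hYcl hyY hy0 hyney0) (hYcl hy'Y hy0 hy'ney0)


end TwoPosEig
end

section
/- Let G ∈ 𝒞𝒢^s(n) with 2 ≤ s ≤ n−3, let v* be a vertex of minimum degree t of G, set X = N(v*), Y = V(G) ∖ N[v*], and suppose G[Y] ≅ K_{n−t−1} with n−t−1 ≥ 2 while G[X] is not complete. Let x, x' ∈ X be non-adjacent with N_Y(x) = {y}. Then N_X(x) = X ∖ {x, x'}. Furthermore, if {y} = N_Y(x) ⊊ N_Y(x') = Y, then for every x* ∈ X ∖ {x, x'}, x* is adjacent to x' if and only if x* is adjacent to y; that is, N_X(x') = N_X(y) ∖ {x, x'}. -/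
open Matrix BigOperators

namespace TwoPosEig

variable {V : Type*}

/-! ### Auxiliary lemmas for Statement 7 -/

lemma adjMat_of_adj [Fintype V] [DecidableEq V] {G : SimpleGraph V} {a b : V}
    (h : G.Adj a b) : adjMat G a b = 1 := by
  unfold adjMat; rw [SimpleGraph.adjMatrix_apply]; exact if_pos h

lemma adjMat_of_not_adj [Fintype V] [DecidableEq V] {G : SimpleGraph V} {a b : V}
    (h : ¬ G.Adj a b) : adjMat G a b = 0 := by
  unfold adjMat; rw [SimpleGraph.adjMatrix_apply]; exact if_neg h

lemma sum_dotProduct' [Fintype V] {ι : Type*} (s : Finset ι) (f : ι → V → ℝ) (w : V → ℝ) :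
    dotProduct (∑ k ∈ s, f k) w = ∑ k ∈ s, dotProduct (f k) w := by
  simp only [dotProduct, Finset.sum_apply, Finset.sum_mul]
  exact Finset.sum_comm

lemma dotProduct_sum' [Fintype V] {ι : Type*} (s : Finset ι) (w : V → ℝ) (f : ι → V → ℝ) :
    dotProduct w (∑ k ∈ s, f k) = ∑ k ∈ s, dotProduct w (f k) := by
  simp only [dotProduct, Finset.sum_apply, Finset.mul_sum]
  exact Finset.sum_comm

lemma mulVec_sum' [Fintype V] {ι : Type*} (s : Finset ι) (A : Matrix V V ℝ) (f : ι → V → ℝ) :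
    A.mulVec (∑ k ∈ s, f k) = ∑ k ∈ s, A.mulVec (f k) := by
  ext i
  simp only [Matrix.mulVec, Finset.sum_apply]
  exact dotProduct_sum' s (A i) f

/-- The quadratic form of the adjacency matrix in eigen-coordinates. -/
lemma quadform_eq [Fintype V] [DecidableEq V] (G : SimpleGraph V) (x : V → ℝ) :
    dotProduct x ((adjMat G).mulVec x)
      = ∑ i, eigs G i * ((adjMat_isHermitian G).eigenvectorBasis.repr (WithLp.toLp 2 x) i)^2 := by
  set hA := adjMat_isHermitian G
  set b := hA.eigenvectorBasis with hb
  have hsum : (∑ i, b.repr (WithLp.toLp 2 x) i • ((b i : EuclideanSpace ℝ V) : V → ℝ)) = x := by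
    have := congrArg WithLp.ofLp (b.sum_repr (WithLp.toLp 2 x))
    simpa [WithLp.ofLp_sum, WithLp.ofLp_smul] using this
  have hdp : ∀ i, dotProduct x (b i) = b.repr (WithLp.toLp 2 x) i := by
    intro i
    rw [b.repr_apply_apply]
    simp [PiLp.inner_apply, dotProduct, mul_comm]
  conv_lhs => rw [← hsum]
  rw [mulVec_sum']
  rw [dotProduct_sum']
  refine Finset.sum_congr rfl fun i _ => ?_
  have : (adjMat G).mulVec (b.repr (WithLp.toLp 2 x) i • ((b i : EuclideanSpace ℝ V) : V → ℝ))
      = (b.repr (WithLp.toLp 2 x) i * eigs G i) • ((b i : EuclideanSpace ℝ V) : V → ℝ) := by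
    rw [Matrix.mulVec_smul, hA.mulVec_eigenvectorBasis i, smul_smul]
    rfl
  rw [this, dotProduct_smul, smul_eq_mul, hsum, hdp i]
  ring

/-- If there is a 3-dimensional positive subspace for the adjacency form, then the graph has
at least three positive eigenvalues. -/
lemma three_le_of_posdef_s7 [Fintype V] [DecidableEq V] (G : SimpleGraph V)
    (W : Fin 3 → V → ℝ)
    (hW : ∀ c : Fin 3 → ℝ, c ≠ 0 →
      0 < dotProduct (∑ j, c j • W j) ((adjMat G).mulVec (∑ j, c j • W j))) :
    3 ≤ Nat.card {i : V // 0 < eigs G i} := by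
  by_contra hcon
  push_neg at hcon
  set hA := adjMat_isHermitian G with hhA
  set b := hA.eigenvectorBasis with hb
  classical
  let L : (Fin 3 → ℝ) →ₗ[ℝ] ({i : V // 0 < eigs G i} → ℝ) :=
    { toFun := fun c => fun i => b.repr (WithLp.toLp 2 (∑ j, c j • W j)) i.1
      map_add' := by
        intro c d
        funext i
        simp only [Pi.add_apply, add_smul, Finset.sum_add_distrib, WithLp.toLp_add, map_add]
        rfl
      map_smul' := by
        intro r c
        funext i
        simp only [Pi.smul_apply, smul_eq_mul, ← smul_smul, ← Finset.smul_sum,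
          RingHom.id_apply]
        rw [WithLp.toLp_smul, _root_.map_smul]
        rfl }
  have hinj : ¬ Function.Injective L := by
    intro hinj
    have h1 := LinearMap.finrank_le_finrank_of_injective hinj
    rw [Module.finrank_fintype_fun_eq_card, Module.finrank_fintype_fun_eq_card] at h1
    simp only [Fintype.card_fin] at h1
    rw [← Nat.card_eq_fintype_card] at h1
    omega
  rw [Function.not_injective_iff] at hinj
  obtain ⟨c, d, hcd, hnecd⟩ := hinj
  set e : Fin 3 → ℝ := c - d with he
  have he0 : e ≠ 0 := sub_ne_zero.mpr hnecd
  have hLe : L e = 0 := by rw [map_sub, hcd, sub_self]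
  have hcoord : ∀ i : V, 0 < eigs G i → b.repr (WithLp.toLp 2 (∑ j, e j • W j)) i = 0 := by
    intro i hi
    exact congrFun hLe ⟨i, hi⟩
  have hpos := hW e he0
  rw [quadform_eq] at hpos
  have : (∑ i, eigs G i * (b.repr (WithLp.toLp 2 (∑ j, e j • W j)) i)^2) ≤ 0 := by
    apply Finset.sum_nonpos
    intro i _
    by_cases hi : 0 < eigs G i
    · rw [hcoord i hi]; ring_nf; simp
    · push_neg at hi
      exact mul_nonpos_of_nonpos_of_nonneg hi (sq_nonneg _)
  linarith

/-- Bridge: a positive-definite 3-dimensional subspace contradicts `p(G) = 2`. -/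
lemma false_of_posdef {n : ℕ} (G : SimpleGraph (Fin n)) (hp : posCount G = 2)
    (W : Fin 3 → Fin n → ℝ)
    (hW : ∀ c : Fin 3 → ℝ, c ≠ 0 →
      0 < dotProduct (∑ j, c j • W j) ((adjMat G).mulVec (∑ j, c j • W j))) :
    False := by
  have h3 := three_le_of_posdef_s7 G W hW
  have hb : posCount G = Nat.card {i : Fin n // 0 < eigs G i} := by
    unfold posCount
    have hE : @eigs (Fin n) (Fintype.ofFinite (Fin n)) (Classical.decEq (Fin n)) G
        = eigs G := by
      congr! <;> exact Subsingleton.elim _ _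
    rw [hE]
  omega

lemma cons_val_five {α : Type*} (x0 x1 x2 x3 x4 x5 : α) :
    ![x0, x1, x2, x3, x4, x5] (5 : Fin 6) = x5 := rfl

lemma combo_eq [Fintype V] [DecidableEq V] (u : Fin 6 → V) (R : Fin 3 → Fin 6 → ℝ)
    (c : Fin 3 → ℝ) :
    (∑ j, c j • (∑ k, R j k • (Pi.single (u k) (1:ℝ) : V → ℝ)))
      = ∑ k, (∑ j, c j * R j k) • (Pi.single (u k) (1:ℝ) : V → ℝ) := by
  simp only [Finset.smul_sum, smul_smul]
  rw [Finset.sum_comm]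
  simp only [← Finset.sum_smul]

lemma quad_expand [Fintype V] [DecidableEq V] (A : Matrix V V ℝ) (u : Fin 6 → V)
    (d : Fin 6 → ℝ) :
    dotProduct (∑ k, d k • (Pi.single (u k) (1:ℝ) : V → ℝ))
        (A.mulVec (∑ k, d k • (Pi.single (u k) (1:ℝ) : V → ℝ)))
      = ∑ k, ∑ l, d k * d l * A (u k) (u l) := by
  rw [mulVec_sum', sum_dotProduct']
  refine Finset.sum_congr rfl fun k _ => ?_
  rw [smul_dotProduct, dotProduct_sum', smul_eq_mul, Finset.mul_sum]
  refine Finset.sum_congr rfl fun l _ => ?_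
  rw [Matrix.mulVec_smul, dotProduct_smul, single_dotProduct,
    Matrix.mulVec_single, smul_eq_mul]
  simp [Matrix.col_apply, mul_assoc]

set_option maxHeartbeats 1600000 in
lemma certA0 {n : ℕ} (G : SimpleGraph (Fin n)) (hp : posCount G = 2)
    (v x z xp y yp : Fin n)
    (h01 : G.Adj v x) (h02 : G.Adj v z) (h03 : G.Adj v xp) (h04 : ¬G.Adj v y)
    (h05 : ¬G.Adj v yp)
    (h12 : G.Adj x z) (h13 : ¬G.Adj x xp) (h14 : G.Adj x y) (h15 : ¬G.Adj x yp)
    (h23 : G.Adj z xp) (h24 : ¬G.Adj z y) (h25 : ¬G.Adj z yp)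
    (h34 : G.Adj xp y) (h35 : G.Adj xp yp) (h45 : G.Adj y yp) : False := by
  set u : Fin 6 → Fin n := ![v, x, z, xp, y, yp] with hu
  set R : Fin 3 → Fin 6 → ℝ := ![![3, 3, 3, 4, 3, 2], ![3, 2, 3, -2, -4, -5], ![2, -5, 2, 4, -4, 1]] with hR
  refine false_of_posdef G hp
    (fun j => ∑ k, R j k • (Pi.single (u k) (1:ℝ) : Fin n → ℝ)) (fun c hc => ?_)
  rw [combo_eq, quad_expand]
  have hcase : c 0 ≠ 0 ∨ c 1 ≠ 0 ∨ c 2 ≠ 0 := by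
    by_contra h
    push_neg at h
    exact hc (funext fun i => by fin_cases i <;> simp [h.1, h.2.1, h.2.2])
  have hdiag : ∀ a : Fin n, adjMat G a a = 0 := fun a => adjMat_of_not_adj (G.irrefl)
  simp only [Fin.sum_univ_six, Fin.sum_univ_three, hu, hR,
    Matrix.cons_val_zero, Matrix.cons_val_one, Matrix.head_cons, Matrix.cons_val_two,
    Matrix.tail_cons, Matrix.cons_val_three, Matrix.cons_val_four, cons_val_five,
    hdiag, adjMat_of_adj h01, adjMat_of_adj h02, adjMat_of_adj h03, adjMat_of_not_adj h04,
    adjMat_of_not_adj h05, adjMat_of_adj h12, adjMat_of_not_adj h13, adjMat_of_adj h14,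
    adjMat_of_not_adj h15, adjMat_of_adj h23, adjMat_of_not_adj h24, adjMat_of_not_adj h25,
    adjMat_of_adj h34, adjMat_of_adj h35, adjMat_of_adj h45,
    adjMat_of_adj h01.symm, adjMat_of_adj h02.symm, adjMat_of_adj h03.symm,
    adjMat_of_not_adj (fun h => h04 h.symm), adjMat_of_not_adj (fun h => h05 h.symm),
    adjMat_of_adj h12.symm, adjMat_of_not_adj (fun h => h13 h.symm), adjMat_of_adj h14.symm,
    adjMat_of_not_adj (fun h => h15 h.symm), adjMat_of_adj h23.symm,
    adjMat_of_not_adj (fun h => h24 h.symm), adjMat_of_not_adj (fun h => h25 h.symm), adjMat_of_adj h34.symm,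
    adjMat_of_adj h35.symm, adjMat_of_adj h45.symm]
  ring_nf
  by_cases h2 : c 2 = 0
  · by_cases h1 : c 1 = 0
    · have h0 : c 0 ≠ 0 := by
        rcases hcase with h | h | h
        · exact h
        · exact absurd h1 h
        · exact absurd h2 h
      simp only [h1, h2]
      nlinarith [mul_self_pos.mpr h0]
    · simp only [h2]
      nlinarith [mul_self_pos.mpr h1, sq_nonneg (172 * c 0 - 15 * c 1 + 10 * c 2)]
  · nlinarith [mul_self_pos.mpr h2, sq_nonneg (172 * c 0 - 15 * c 1 + 10 * c 2), sq_nonneg (13191 * c 1 + 838 * c 2)]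

set_option maxHeartbeats 1600000 in
lemma certA1 {n : ℕ} (G : SimpleGraph (Fin n)) (hp : posCount G = 2)
    (v x z xp y yp : Fin n)
    (h01 : G.Adj v x) (h02 : G.Adj v z) (h03 : G.Adj v xp) (h04 : ¬G.Adj v y)
    (h05 : ¬G.Adj v yp)
    (h12 : G.Adj x z) (h13 : ¬G.Adj x xp) (h14 : G.Adj x y) (h15 : ¬G.Adj x yp)
    (h23 : G.Adj z xp) (h24 : ¬G.Adj z y) (h25 : G.Adj z yp)
    (h34 : G.Adj xp y) (h35 : G.Adj xp yp) (h45 : G.Adj y yp) : False := by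
  set u : Fin 6 → Fin n := ![v, x, z, xp, y, yp] with hu
  set R : Fin 3 → Fin 6 → ℝ := ![![3, 3, 4, 4, 3, 3], ![4, 3, 2, -2, -3, -4], ![1, -5, 3, 3, -5, 1]] with hR
  refine false_of_posdef G hp
    (fun j => ∑ k, R j k • (Pi.single (u k) (1:ℝ) : Fin n → ℝ)) (fun c hc => ?_)
  rw [combo_eq, quad_expand]
  have hcase : c 0 ≠ 0 ∨ c 1 ≠ 0 ∨ c 2 ≠ 0 := by
    by_contra h
    push_neg at h
    exact hc (funext fun i => by fin_cases i <;> simp [h.1, h.2.1, h.2.2])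
  have hdiag : ∀ a : Fin n, adjMat G a a = 0 := fun a => adjMat_of_not_adj (G.irrefl)
  simp only [Fin.sum_univ_six, Fin.sum_univ_three, hu, hR,
    Matrix.cons_val_zero, Matrix.cons_val_one, Matrix.head_cons, Matrix.cons_val_two,
    Matrix.tail_cons, Matrix.cons_val_three, Matrix.cons_val_four, cons_val_five,
    hdiag, adjMat_of_adj h01, adjMat_of_adj h02, adjMat_of_adj h03, adjMat_of_not_adj h04,
    adjMat_of_not_adj h05, adjMat_of_adj h12, adjMat_of_not_adj h13, adjMat_of_adj h14,
    adjMat_of_not_adj h15, adjMat_of_adj h23, adjMat_of_not_adj h24, adjMat_of_adj h25,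
    adjMat_of_adj h34, adjMat_of_adj h35, adjMat_of_adj h45,
    adjMat_of_adj h01.symm, adjMat_of_adj h02.symm, adjMat_of_adj h03.symm,
    adjMat_of_not_adj (fun h => h04 h.symm), adjMat_of_not_adj (fun h => h05 h.symm),
    adjMat_of_adj h12.symm, adjMat_of_not_adj (fun h => h13 h.symm), adjMat_of_adj h14.symm,
    adjMat_of_not_adj (fun h => h15 h.symm), adjMat_of_adj h23.symm,
    adjMat_of_not_adj (fun h => h24 h.symm), adjMat_of_adj h25.symm, adjMat_of_adj h34.symm,
    adjMat_of_adj h35.symm, adjMat_of_adj h45.symm]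
  ring_nf
  rcases hcase with h | h | h <;>
    nlinarith [mul_self_pos.mpr h, sq_nonneg (c 0), sq_nonneg (c 1), sq_nonneg (c 2)]

set_option maxHeartbeats 1600000 in
lemma certB0 {n : ℕ} (G : SimpleGraph (Fin n)) (hp : posCount G = 2)
    (v x z xp y yp : Fin n)
    (h01 : G.Adj v x) (h02 : G.Adj v z) (h03 : G.Adj v xp) (h04 : ¬G.Adj v y)
    (h05 : ¬G.Adj v yp)
    (h12 : G.Adj x z) (h13 : ¬G.Adj x xp) (h14 : G.Adj x y) (h15 : ¬G.Adj x yp)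
    (h23 : ¬G.Adj z xp) (h24 : G.Adj z y) (h25 : ¬G.Adj z yp)
    (h34 : G.Adj xp y) (h35 : G.Adj xp yp) (h45 : G.Adj y yp) : False := by
  set u : Fin 6 → Fin n := ![v, x, z, xp, y, yp] with hu
  set R : Fin 3 → Fin 6 → ℝ := ![![3, 3, 3, 3, 4, 2], ![2, 3, 3, -4, -2, -5], ![5, -2, -2, 4, -4, -1]] with hR
  refine false_of_posdef G hp
    (fun j => ∑ k, R j k • (Pi.single (u k) (1:ℝ) : Fin n → ℝ)) (fun c hc => ?_)
  rw [combo_eq, quad_expand]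
  have hcase : c 0 ≠ 0 ∨ c 1 ≠ 0 ∨ c 2 ≠ 0 := by
    by_contra h
    push_neg at h
    exact hc (funext fun i => by fin_cases i <;> simp [h.1, h.2.1, h.2.2])
  have hdiag : ∀ a : Fin n, adjMat G a a = 0 := fun a => adjMat_of_not_adj (G.irrefl)
  simp only [Fin.sum_univ_six, Fin.sum_univ_three, hu, hR,
    Matrix.cons_val_zero, Matrix.cons_val_one, Matrix.head_cons, Matrix.cons_val_two,
    Matrix.tail_cons, Matrix.cons_val_three, Matrix.cons_val_four, cons_val_five,
    hdiag, adjMat_of_adj h01, adjMat_of_adj h02, adjMat_of_adj h03, adjMat_of_not_adj h04,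
    adjMat_of_not_adj h05, adjMat_of_adj h12, adjMat_of_not_adj h13, adjMat_of_adj h14,
    adjMat_of_not_adj h15, adjMat_of_not_adj h23, adjMat_of_adj h24, adjMat_of_not_adj h25,
    adjMat_of_adj h34, adjMat_of_adj h35, adjMat_of_adj h45,
    adjMat_of_adj h01.symm, adjMat_of_adj h02.symm, adjMat_of_adj h03.symm,
    adjMat_of_not_adj (fun h => h04 h.symm), adjMat_of_not_adj (fun h => h05 h.symm),
    adjMat_of_adj h12.symm, adjMat_of_not_adj (fun h => h13 h.symm), adjMat_of_adj h14.symm,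
    adjMat_of_not_adj (fun h => h15 h.symm), adjMat_of_not_adj (fun h => h23 h.symm),
    adjMat_of_adj h24.symm, adjMat_of_not_adj (fun h => h25 h.symm), adjMat_of_adj h34.symm,
    adjMat_of_adj h35.symm, adjMat_of_adj h45.symm]
  ring_nf
  by_cases h2 : c 2 = 0
  · by_cases h1 : c 1 = 0
    · have h0 : c 0 ≠ 0 := by
        rcases hcase with h | h | h
        · exact h
        · exact absurd h1 h
        · exact absurd h2 h
      simp only [h1, h2]
      nlinarith [mul_self_pos.mpr h0]
    · simp only [h2]
      nlinarith [mul_self_pos.mpr h1, sq_nonneg (172 * c 0 - 15 * c 1 - 10 * c 2)]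
  · nlinarith [mul_self_pos.mpr h2, sq_nonneg (172 * c 0 - 15 * c 1 - 10 * c 2), sq_nonneg (13191 * c 1 - 838 * c 2)]

set_option maxHeartbeats 1600000 in
lemma certB1 {n : ℕ} (G : SimpleGraph (Fin n)) (hp : posCount G = 2)
    (v x z xp y yp : Fin n)
    (h01 : G.Adj v x) (h02 : G.Adj v z) (h03 : G.Adj v xp) (h04 : ¬G.Adj v y)
    (h05 : ¬G.Adj v yp)
    (h12 : G.Adj x z) (h13 : ¬G.Adj x xp) (h14 : G.Adj x y) (h15 : ¬G.Adj x yp)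
    (h23 : ¬G.Adj z xp) (h24 : G.Adj z y) (h25 : G.Adj z yp)
    (h34 : G.Adj xp y) (h35 : G.Adj xp yp) (h45 : G.Adj y yp) : False := by
  set u : Fin 6 → Fin n := ![v, x, z, xp, y, yp] with hu
  set R : Fin 3 → Fin 6 → ℝ := ![![3, 3, 4, 3, 4, 3], ![3, 4, 2, -3, -2, -4], ![5, -1, -3, 5, -3, -1]] with hR
  refine false_of_posdef G hp
    (fun j => ∑ k, R j k • (Pi.single (u k) (1:ℝ) : Fin n → ℝ)) (fun c hc => ?_)
  rw [combo_eq, quad_expand]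
  have hcase : c 0 ≠ 0 ∨ c 1 ≠ 0 ∨ c 2 ≠ 0 := by
    by_contra h
    push_neg at h
    exact hc (funext fun i => by fin_cases i <;> simp [h.1, h.2.1, h.2.2])
  have hdiag : ∀ a : Fin n, adjMat G a a = 0 := fun a => adjMat_of_not_adj (G.irrefl)
  simp only [Fin.sum_univ_six, Fin.sum_univ_three, hu, hR,
    Matrix.cons_val_zero, Matrix.cons_val_one, Matrix.head_cons, Matrix.cons_val_two,
    Matrix.tail_cons, Matrix.cons_val_three, Matrix.cons_val_four, cons_val_five,
    hdiag, adjMat_of_adj h01, adjMat_of_adj h02, adjMat_of_adj h03, adjMat_of_not_adj h04,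
    adjMat_of_not_adj h05, adjMat_of_adj h12, adjMat_of_not_adj h13, adjMat_of_adj h14,
    adjMat_of_not_adj h15, adjMat_of_not_adj h23, adjMat_of_adj h24, adjMat_of_adj h25,
    adjMat_of_adj h34, adjMat_of_adj h35, adjMat_of_adj h45,
    adjMat_of_adj h01.symm, adjMat_of_adj h02.symm, adjMat_of_adj h03.symm,
    adjMat_of_not_adj (fun h => h04 h.symm), adjMat_of_not_adj (fun h => h05 h.symm),
    adjMat_of_adj h12.symm, adjMat_of_not_adj (fun h => h13 h.symm), adjMat_of_adj h14.symm,
    adjMat_of_not_adj (fun h => h15 h.symm), adjMat_of_not_adj (fun h => h23 h.symm),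
    adjMat_of_adj h24.symm, adjMat_of_adj h25.symm, adjMat_of_adj h34.symm,
    adjMat_of_adj h35.symm, adjMat_of_adj h45.symm]
  ring_nf
  rcases hcase with h | h | h <;>
    nlinarith [mul_self_pos.mpr h, sq_nonneg (c 0), sq_nonneg (c 1), sq_nonneg (c 2)]

theorem Xincomplete_pendant {n s : ℕ} (hs : 2 ≤ s) (hsn : s ≤ n - 3)
    (G : SimpleGraph (Fin n)) (hconn : G.Connected) (hG : memClass s G)
    (v : Fin n) (hv : IsMinDegVertex G v)
    (X Y : Set (Fin n)) (hX : X = G.neighborSet v) (hY : Y = Yset G v)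
    (hYcl : Y.Pairwise G.Adj) (hYcard : 2 ≤ Y.ncard) (hXinc : ¬ X.Pairwise G.Adj)
    (x x' : Fin n) (hx : x ∈ X) (hx' : x' ∈ X) (hne : x ≠ x') (hnadj : ¬ G.Adj x x')
    (y : Fin n) (hNy : G.neighborSet x ∩ Y = {y}) :
    G.neighborSet x ∩ X = X \ {x, x'} ∧
    (G.neighborSet x' ∩ Y = Y →
      ((∀ z ∈ X \ ({x, x'} : Set (Fin n)), (G.Adj z x' ↔ G.Adj z y)) ∧
        G.neighborSet x' ∩ X = (G.neighborSet y ∩ X) \ {x, x'})) := by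
  subst hX hY
  classical
  have hp : posCount G = 2 := hG.1
  have hvx : G.Adj v x := hx
  have hvx' : G.Adj v x' := hx'
  have hyN : y ∈ G.neighborSet x ∩ Yset G v := by rw [hNy]; exact Set.mem_singleton y
  have hxy : G.Adj x y := hyN.1
  have hyY : y ∈ Yset G v := hyN.2
  have hYmem : ∀ {a : Fin n}, a ∈ Yset G v → ¬ G.Adj v a ∧ a ≠ v := by
    intro a ha
    simp only [Yset, Set.mem_compl_iff, Set.mem_union, Set.mem_singleton_iff,
      SimpleGraph.mem_neighborSet] at ha
    push_neg at ha
    exact ha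
  have hNYx : ∀ {a : Fin n}, a ∈ Yset G v → a ≠ y → ¬ G.Adj x a := by
    intro a ha hay hadj
    have hmem : a ∈ G.neighborSet x ∩ Yset G v := ⟨hadj, ha⟩
    rw [hNy] at hmem
    exact hay hmem
  -- Part 1 : degree counting
  have hsub : G.neighborSet x ∩ G.neighborSet v ⊆ G.neighborSet v \ {x, x'} := by
    rintro u ⟨hu1, hu2⟩
    refine ⟨hu2, ?_⟩
    intro hu
    rcases hu with rfl | hu
    · exact G.irrefl hu1
    · rw [Set.mem_singleton_iff] at hu
      subst hu
      exact hnadj hu1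
  have hdecomp : G.neighborSet x
      = ({v} ∪ (G.neighborSet x ∩ G.neighborSet v)) ∪ (G.neighborSet x ∩ Yset G v) := by
    apply Set.Subset.antisymm
    · intro u hu
      by_cases h1 : u ∈ G.neighborSet v
      · exact Or.inl (Or.inr ⟨hu, h1⟩)
      · by_cases h2 : u = v
        · exact Or.inl (Or.inl h2)
        · refine Or.inr ⟨hu, ?_⟩
          simp only [Yset, Set.mem_compl_iff, Set.mem_union, Set.mem_singleton_iff]
          push_neg
          exact ⟨h1, h2⟩
    · rintro u ((hu | hu) | hu)
      · rw [Set.mem_singleton_iff] at hu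
        subst hu
        exact hvx.symm
      · exact hu.1
      · exact hu.1
  have hcard1 : (G.neighborSet x ∩ Yset G v).ncard = 1 := by
    rw [hNy]; exact Set.ncard_singleton y
  have hdisjA : Disjoint ({v} ∪ (G.neighborSet x ∩ G.neighborSet v) : Set (Fin n))
      (G.neighborSet x ∩ Yset G v) := by
    rw [Set.disjoint_left]
    rintro a (ha | ha) ⟨_, haY⟩
    · rw [Set.mem_singleton_iff] at ha
      exact (hYmem haY).2 ha
    · exact (hYmem haY).1 ha.2
  have hdisjB : Disjoint ({v} : Set (Fin n)) (G.neighborSet x ∩ G.neighborSet v) := by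
    rw [Set.disjoint_left]
    rintro a ha ⟨_, ha2⟩
    rw [Set.mem_singleton_iff] at ha
    subst ha
    exact G.irrefl ha2
  have hEq : (G.neighborSet x).ncard
      = 1 + (G.neighborSet x ∩ G.neighborSet v).ncard + 1 := by
    conv_lhs => rw [hdecomp]
    rw [Set.ncard_union_eq hdisjA (Set.toFinite _) (Set.toFinite _),
      Set.ncard_union_eq hdisjB (Set.toFinite _) (Set.toFinite _), Set.ncard_singleton, hcard1]
  have hdeg : ∀ a : Fin n, deg G a = (G.neighborSet a).ncard := by
    intro a
    unfold deg
    exact Nat.card_coe_set_eq _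
  have hvle := hv x
  rw [hdeg, hdeg] at hvle
  have hpair : ({x, x'} : Set (Fin n)).ncard = 2 := Set.ncard_pair hne
  have hss : ({x, x'} : Set (Fin n)) ⊆ G.neighborSet v := by
    rintro a (rfl | ha)
    · exact hx
    · rw [Set.mem_singleton_iff] at ha
      subst ha
      exact hx'
  have hdiffcard : (G.neighborSet v \ {x, x'}).ncard = (G.neighborSet v).ncard - 2 := by
    rw [Set.ncard_diff hss (Set.toFinite _), hpair]
  have hle2 : 2 ≤ (G.neighborSet v).ncard := by
    calc 2 = ({x, x'} : Set (Fin n)).ncard := hpair.symm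
    _ ≤ (G.neighborSet v).ncard := Set.ncard_le_ncard hss (Set.toFinite _)
  have hkey : (G.neighborSet v \ {x, x'}).ncard
      ≤ (G.neighborSet x ∩ G.neighborSet v).ncard := by omega
  have hc1 : G.neighborSet x ∩ G.neighborSet v = G.neighborSet v \ {x, x'} :=
    Set.eq_of_subset_of_ncard_le hsub hkey (Set.toFinite _)
  refine ⟨hc1, ?_⟩
  -- Part 2
  intro hY'
  obtain ⟨y', hy'Y, hy'ne⟩ :=
    Set.exists_ne_of_one_lt_ncard (by omega : 1 < (Yset G v).ncard) y
  have hvy : ¬ G.Adj v y := (hYmem hyY).1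
  have hvy' : ¬ G.Adj v y' := (hYmem hy'Y).1
  have hxy' : ¬ G.Adj x y' := hNYx hy'Y hy'ne
  have hx'y : G.Adj x' y := by
    have : y ∈ G.neighborSet x' ∩ Yset G v := by rw [hY']; exact hyY
    exact this.1
  have hx'y' : G.Adj x' y' := by
    have : y' ∈ G.neighborSet x' ∩ Yset G v := by rw [hY']; exact hy'Y
    exact this.1
  have hyy' : G.Adj y y' := hYcl hyY hy'Y (Ne.symm hy'ne)
  have claim : ∀ z ∈ G.neighborSet v \ ({x, x'} : Set (Fin n)), (G.Adj z x' ↔ G.Adj z y) := by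
    rintro z ⟨hzv, hz2⟩
    simp only [Set.mem_insert_iff, Set.mem_singleton_iff] at hz2
    push_neg at hz2
    have hvz : G.Adj v z := hzv
    have hxz : G.Adj x z := by
      have hzmem : z ∈ G.neighborSet v \ ({x, x'} : Set (Fin n)) := by
        refine ⟨hzv, ?_⟩
        simp only [Set.mem_insert_iff, Set.mem_singleton_iff]
        push_neg
        exact hz2
      rw [← hc1] at hzmem
      exact hzmem.1
    constructor
    · intro hzx'
      by_contra hzy
      by_cases hzy' : G.Adj z y'
      · exact certA1 G hp v x z x' y y' hvx hvz hvx' hvy hvy' hxz hnadj hxy hxy'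
          hzx' hzy hzy' hx'y hx'y' hyy'
      · exact certA0 G hp v x z x' y y' hvx hvz hvx' hvy hvy' hxz hnadj hxy hxy'
          hzx' hzy hzy' hx'y hx'y' hyy'
    · intro hzy
      by_contra hzx'
      by_cases hzy' : G.Adj z y'
      · exact certB1 G hp v x z x' y y' hvx hvz hvx' hvy hvy' hxz hnadj hxy hxy'
          hzx' hzy hzy' hx'y hx'y' hyy'
      · exact certB0 G hp v x z x' y y' hvx hvz hvx' hvy hvy' hxz hnadj hxy hxy'
          hzx' hzy hzy' hx'y hx'y' hyy'
  refine ⟨claim, ?_⟩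
  ext u
  simp only [Set.mem_inter_iff, Set.mem_diff, Set.mem_insert_iff, Set.mem_singleton_iff,
    SimpleGraph.mem_neighborSet]
  constructor
  · rintro ⟨hu1, hu2⟩
    have hux : u ≠ x := by
      rintro rfl
      exact hnadj hu1.symm
    have hux' : u ≠ x' := by
      rintro rfl
      exact G.irrefl hu1
    have hiff := claim u ⟨hu2, by simp [hux, hux']⟩
    exact ⟨⟨(hiff.mp hu1.symm).symm, hu2⟩, by push_neg; exact ⟨hux, hux'⟩⟩
  · rintro ⟨⟨hy1, hu2⟩, hu3⟩
    push_neg at hu3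
    have hiff := claim u ⟨hu2, by simp [hu3.1, hu3.2]⟩
    exact ⟨(hiff.mpr hy1.symm).symm, hu2⟩

end TwoPosEig
end
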